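/- arXiv:1512.07129 — 3 statements merged into one kernel-verified Lean document; each statement's English description precedes it below -/
import Mathlib

section
/- For all finite subsets F, F' ⊂ ℕ the dual lattices satisfy (Γ_F)* = Σ_{n∈F} (Γ_n)* (where Γ_∅* = Γ*), (Γ_F)* ∩ (Γ_{F'})* = (Γ_{F∩F'})*, and [(Γ_F)* : Γ*] = ∏_{n∈F} [Γ : Γ_n]. Consequently, setting Σ := ⋃_{F ⊂ ℕ finite} (Γ_F)*, for each k ∈ Σ the set F_k := ⋂ {F ⊂ ℕ finite : k ∈ (Γ_F)*} is a finite set satisfying k ∈ (Γ_{F_k})*, i.e. there is a unique smallest finite F with k ∈ (Γ_F)*. -/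
open MeasureTheory Filter Set Topology

noncomputable section

/-- Euclidean `d`-space. -/
abbrev Euc (d : ℕ) : Type := EuclideanSpace ℝ (Fin d)

/-- The index `[Γ : Γ']` of a sublattice `Γ' ≤ Γ`. -/
def latIndex {d : ℕ} (Γ Γ' : Submodule ℤ (Euc d)) : ℕ :=
  AddSubgroup.relIndex Γ'.toAddSubgroup Γ.toAddSubgroup

/-- `Γ_F = ⋂_{n ∈ F} Γ_n`, with `Γ_∅ = Γ`. -/
def latF {d : ℕ} (Γ : Submodule ℤ (Euc d)) (Γn : ℕ → Submodule ℤ (Euc d))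
    (F : Finset ℕ) : Submodule ℤ (Euc d) :=
  Γ ⊓ F.inf Γn

/-- A coprime family of proper finite-index sublattices of `Γ`. -/
structure IsCoprimeSublatticeFamily {d : ℕ} (Γ : Submodule ℤ (Euc d))
    (Γn : ℕ → Submodule ℤ (Euc d)) : Prop where
  proper : ∀ n, Γn n < Γ
  finiteIndex : ∀ n, latIndex Γ (Γn n) ≠ 0
  coprime : ∀ i j, i ≠ j → Γn i ⊔ Γn j = Γ
  gcdLaw : ∀ F F' : Finset ℕ, latF Γ Γn F ⊔ latF Γ Γn F' = latF Γ Γn (F ∩ F')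
  summable : Summable fun n => ((latIndex Γ (Γn n) : ℝ))⁻¹

/-- `S` has natural density `c` along the centred open balls of radius `m`. -/
def HasNatDensity {d : ℕ} (S : Set (Euc d)) (c : ℝ) : Prop :=
  Tendsto (fun m : ℕ => (Nat.card ↥(S ∩ Metric.ball (0 : Euc d) m) : ℝ) /
    (volume (Metric.ball (0 : Euc d) (m : ℝ))).toReal) atTop (nhds c)

/-- The upper natural density of `S` along the centred open balls of radius `m`. -/
def upperNatDensity {d : ℕ} (S : Set (Euc d)) : ℝ :=
  limsup (fun m : ℕ => (Nat.card ↥(S ∩ Metric.ball (0 : Euc d) m) : ℝ) /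
    (volume (Metric.ball (0 : Euc d) (m : ℝ))).toReal) atTop

/-- The dual lattice `Λ* = {y ∈ ℝ^d : ⟨y,x⟩ ∈ ℤ for all x ∈ Λ}`. -/
def dualLattice {d : ℕ} (Λ : Submodule ℤ (Euc d)) : Submodule ℤ (Euc d) where
  carrier := {y | ∀ x ∈ Λ, ∃ m : ℤ, (inner ℝ y x : ℝ) = m}
  add_mem' := by
    intro a b ha hb x hx
    obtain ⟨m, hm⟩ := ha x hx
    obtain ⟨m', hm'⟩ := hb x hx
    exact ⟨m + m', by rw [inner_add_left, hm, hm']; push_cast; ring⟩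
  zero_mem' := fun x _ => ⟨0, by simp⟩
  smul_mem' := by
    intro c a ha x hx
    obtain ⟨m, hm⟩ := ha x hx
    refine ⟨c * m, ?_⟩
    have h : (c • a : Euc d) = (c : ℝ) • a := (Int.cast_smul_eq_zsmul ℝ c a).symm
    rw [h, real_inner_smul_left, hm]
    push_cast; ring


section Aux
variable {d : ℕ}

lemma mem_dualLattice {Λ : Submodule ℤ (Euc d)} {y : Euc d} :
    y ∈ dualLattice Λ ↔ ∀ x ∈ Λ, ∃ m : ℤ, (inner ℝ y x : ℝ) = m := Iff.rfl

lemma dualLattice_antitone {Λ Λ' : Submodule ℤ (Euc d)} (h : Λ ≤ Λ') :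
    dualLattice Λ' ≤ dualLattice Λ := fun _ hy x hx => hy x (h hx)

lemma dualLattice_sup (A B : Submodule ℤ (Euc d)) :
    dualLattice (A ⊔ B) = dualLattice A ⊓ dualLattice B := by
  refine le_antisymm (le_inf (dualLattice_antitone le_sup_left)
    (dualLattice_antitone le_sup_right)) ?_
  rintro y ⟨hyA, hyB⟩ x hx
  obtain ⟨a, ha, b, hb, rfl⟩ := Submodule.mem_sup.mp hx
  obtain ⟨m, hm⟩ := hyA a ha
  obtain ⟨m', hm'⟩ := hyB b hb
  exact ⟨m + m', by rw [inner_add_right, hm, hm']; push_cast; ring⟩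

lemma toAddSubgroup_sup (A B : Submodule ℤ (Euc d)) :
    (A ⊔ B).toAddSubgroup = A.toAddSubgroup ⊔ B.toAddSubgroup := by
  ext x
  simp only [Submodule.mem_toAddSubgroup, Submodule.mem_sup, AddSubgroup.mem_sup]

lemma toAddSubgroup_inf (A B : Submodule ℤ (Euc d)) :
    (A ⊓ B).toAddSubgroup = A.toAddSubgroup ⊓ B.toAddSubgroup := rfl

lemma relindex_eq_index_comap (P Q : Submodule ℤ (Euc d)) :
    AddSubgroup.relIndex P.toAddSubgroup Q.toAddSubgroup
      = (Submodule.comap Q.subtype P).toAddSubgroup.index := by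
  rfl

end Aux
section DualVec
open Submodule Module
variable {d : ℕ} {ι : Type*}
variable [Fintype ι]
set_option linter.unusedSectionVars false

/-- The vector representing the `i`-th coordinate functional of the basis `c`. -/
noncomputable def dualVec (c : Basis ι ℝ (Euc d)) (i : ι) : Euc d :=
  (InnerProductSpace.toDual ℝ (Euc d)).symm
    (LinearMap.toContinuousLinearMap (c.coord i))

lemma inner_dualVec (c : Basis ι ℝ (Euc d)) (i : ι) (x : Euc d) :
    (inner ℝ (dualVec c i) x : ℝ) = c.repr x i := by
  simp [dualVec, InnerProductSpace.toDual_symm_apply]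

lemma inner_left_eq {y z : Euc d} (h : ∀ v, (inner ℝ y v : ℝ) = inner ℝ z v) : y = z := by
  have h2 : ∀ v : Euc d, (inner ℝ (y - z) v : ℝ) = 0 := by
    intro v; rw [inner_sub_left, h v, sub_self]
  have := h2 (y - z)
  rw [inner_self_eq_zero] at this
  exact sub_eq_zero.mp this

lemma sum_mul_single {ι : Type*} [Fintype ι] (g : ι → ℝ) (j : ι) :
    ∑ i, g i * ((Finsupp.single j (1:ℝ)) i) = g j := by
  rw [Finset.sum_eq_single j
    (fun b _ hb => by rw [Finsupp.single_eq_of_ne' (Ne.symm hb), mul_zero])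
    (fun h => absurd (Finset.mem_univ j) h)]
  simp

lemma dualVec_linearIndependent (c : Basis ι ℝ (Euc d)) :
    LinearIndependent ℝ (dualVec c) := by
  rw [Fintype.linearIndependent_iff]
  intro g hg j
  have key : (inner ℝ (∑ i, g i • dualVec c i) (c j) : ℝ) = g j := by
    rw [sum_inner]
    have h1 : ∀ i, (inner ℝ (g i • dualVec c i) (c j) : ℝ)
        = g i * ((Finsupp.single j (1:ℝ)) i) := by
      intro i
      rw [real_inner_smul_left, inner_dualVec, Basis.repr_self]
    simp_rw [h1]
    exact sum_mul_single g j
  rw [hg] at key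
  simpa using key.symm

end DualVec
section DualSpan
open Submodule Module
variable {d : ℕ} {ι : Type*} [Fintype ι]
set_option linter.unusedSectionVars false

lemma sum_mul_single' {ι : Type*} [Fintype ι] (g : ι → ℝ) (j : ι) :
    ∑ i, g i * ((Finsupp.single i (1:ℝ)) j) = g j := by
  rw [Finset.sum_eq_single j
    (fun b _ hb => by rw [Finsupp.single_eq_of_ne' hb, mul_zero])
    (fun h => absurd (Finset.mem_univ j) h)]
  simp

lemma repr_int_of_mem_span (c : Basis ι ℝ (Euc d)) {x : Euc d}
    (hx : x ∈ span ℤ (Set.range (c : ι → Euc d))) (i : ι) :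
    ∃ m : ℤ, (c.repr x i : ℝ) = m := by
  obtain ⟨g, rfl⟩ := (mem_span_range_iff_exists_fun ℤ).mp hx
  refine ⟨g i, ?_⟩
  have : ∀ j : ι, (g j : ℤ) • c j = ((g j : ℝ)) • c j := fun j =>
    (Int.cast_smul_eq_zsmul ℝ (g j) (c j)).symm
  simp_rw [this]
  rw [map_sum]
  have h2 : ∀ j, (c.repr ((g j : ℝ) • c j)) i
      = (g j : ℝ) * ((Finsupp.single j (1:ℝ)) i) := by
    intro j
    rw [_root_.map_smul, Basis.repr_self]
    rw [Finsupp.smul_apply, smul_eq_mul]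
  simp_rw [Finsupp.coe_finset_sum, Finset.sum_apply, h2]
  exact sum_mul_single' _ i

lemma dualVec_mem_dualLattice (c : Basis ι ℝ (Euc d)) (i : ι) :
    dualVec c i ∈ dualLattice (span ℤ (Set.range (c : ι → Euc d))) := by
  intro x hx
  obtain ⟨m, hm⟩ := repr_int_of_mem_span c hx i
  exact ⟨m, by rw [inner_dualVec, hm]⟩

lemma dualLattice_span_eq (c : Basis ι ℝ (Euc d)) :
    dualLattice (span ℤ (Set.range (c : ι → Euc d)))
      = span ℤ (Set.range (dualVec c)) := by
  refine le_antisymm ?_ ?_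
  · intro y hy
    choose m hm using fun i => hy (c i) (subset_span ⟨i, rfl⟩)
    have hy2 : y = ∑ i, m i • dualVec c i := by
      apply inner_left_eq
      intro v
      conv_lhs => rw [← c.sum_repr v]
      rw [inner_sum, sum_inner]
      refine Finset.sum_congr rfl fun i _ => ?_
      rw [real_inner_smul_right, hm i]
      have : (m i : ℤ) • dualVec c i = ((m i : ℝ)) • dualVec c i :=
        (Int.cast_smul_eq_zsmul ℝ (m i) (dualVec c i)).symm
      rw [this, real_inner_smul_left, inner_dualVec, mul_comm]
    rw [hy2]
    exact Submodule.sum_smul_mem _ _ fun i _ => subset_span ⟨i, rfl⟩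
  · rw [span_le]
    rintro _ ⟨i, rfl⟩
    exact dualVec_mem_dualLattice c i

lemma dualVec_unitsSMul (c : Basis ι ℝ (Euc d)) (u : ι → ℝˣ) (i : ι) :
    dualVec (c.unitsSMul u) i = ((u i)⁻¹ : ℝˣ) • dualVec c i := by
  apply inner_left_eq
  intro v
  rw [inner_dualVec, Basis.repr_unitsSMul, Units.smul_def, Units.smul_def,
    real_inner_smul_left, inner_dualVec, smul_eq_mul]

end DualSpan
section DualInf
open Submodule Module
variable {d : ℕ}
set_option linter.unusedSectionVars false

lemma dualLattice_inf_of_sup_eq (Γ : Submodule ℤ (Euc d)) [DiscreteTopology Γ]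
    [IsZLattice ℝ Γ] (A B : Submodule ℤ (Euc d)) (h : A ⊔ B = Γ) :
    dualLattice (A ⊓ B) = dualLattice A ⊔ dualLattice B := by
  have hA : A ≤ Γ := h ▸ le_sup_left
  have hB : B ≤ Γ := h ▸ le_sup_right
  refine le_antisymm ?_ (sup_le (dualLattice_antitone inf_le_left)
    (dualLattice_antitone inf_le_right))
  intro y hy
  have hfin : Module.Finite ℤ Γ := ZLattice.module_finite ℝ Γ
  have hfree : Module.Free ℤ Γ := ZLattice.module_free ℝ Γ
  let b := Free.chooseBasis ℤ Γ
  let e : Basis (Free.ChooseBasisIndex ℤ Γ) ℝ (Euc d) := b.ofZLatticeBasis ℝ Γ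
  have he : ∀ i, e i ∈ A ⊔ B := by
    intro i
    have : e i ∈ span ℤ (Set.range (e : _ → Euc d)) := subset_span ⟨i, rfl⟩
    rw [b.ofZLatticeBasis_span ℝ] at this
    exact (le_of_eq h.symm) this
  choose av hav bv hbv hsum using fun i => Submodule.mem_sup.mp (he i)
  -- the candidate vector in `dualLattice A`
  set u : Euc d := ∑ i, (inner ℝ y (bv i) : ℝ) • dualVec e i with hu
  -- for `x ∈ Γ`, `⟪u, x⟫ = ⟪y, sB x⟫` where `sB x = ∑ (repr x i) • bv i`
  have key : ∀ x ∈ Γ, ∃ sA ∈ A, ∃ sB ∈ B, sA + sB = x ∧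
      (inner ℝ u x : ℝ) = inner ℝ y sB := by
    intro x hx
    set m : _ → ℤ := fun i => b.repr ⟨x, hx⟩ i with hm
    have hrepr : ∀ i, e.repr x i = (m i : ℝ) := fun i =>
      b.ofZLatticeBasis_repr_apply ℝ Γ ⟨x, hx⟩ i
    have hxsum : ∑ i, m i • e i = x := by
      have := e.sum_repr x
      rw [← this]
      refine Finset.sum_congr rfl fun i _ => ?_
      rw [hrepr i, Int.cast_smul_eq_zsmul]
    refine ⟨∑ i, m i • av i, Submodule.sum_smul_mem _ _ fun i _ => hav i,
      ∑ i, m i • bv i, Submodule.sum_smul_mem _ _ fun i _ => hbv i, ?_, ?_⟩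
    · rw [← Finset.sum_add_distrib, ← hxsum]
      refine Finset.sum_congr rfl fun i _ => ?_
      rw [← smul_add, hsum i]
    · rw [hu, sum_inner, inner_sum]
      refine Finset.sum_congr rfl fun i _ => ?_
      rw [real_inner_smul_left, inner_dualVec, hrepr i,
        ← Int.cast_smul_eq_zsmul ℝ (m i) (bv i), real_inner_smul_right, mul_comm]
  have huA : u ∈ dualLattice A := by
    intro x hx
    obtain ⟨sA, hsA, sB, hsB, hsum', hinner⟩ := key x (hA hx)
    have hsB' : sB ∈ A ⊓ B := ⟨by
      have : sB = x - sA := by rw [← hsum']; abel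
      rw [this]; exact sub_mem hx hsA, hsB⟩
    obtain ⟨k, hk⟩ := hy sB hsB'
    exact ⟨k, by rw [hinner, hk]⟩
  have hyuB : y - u ∈ dualLattice B := by
    intro x hx
    obtain ⟨sA, hsA, sB, hsB, hsum', hinner⟩ := key x (hB hx)
    have hsA' : sA ∈ A ⊓ B := ⟨hsA, by
      have : sA = x - sB := by rw [← hsum']; abel
      rw [this]; exact sub_mem hx hsB⟩
    obtain ⟨k, hk⟩ := hy sA hsA'
    refine ⟨k, ?_⟩
    rw [inner_sub_left, hinner, ← inner_sub_right]
    have : x - sB = sA := by rw [← hsum']; abel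
    rw [this, hk]
  have : y = u + (y - u) := by abel
  rw [this]
  exact Submodule.add_mem_sup huA hyuB

end DualInf
section Fam
open Submodule
variable {d : ℕ} (Γ : Submodule ℤ (Euc d)) (Γn : ℕ → Submodule ℤ (Euc d))
set_option linter.unusedSectionVars false

lemma latF_empty : latF Γ Γn ∅ = Γ := by simp [latF]

lemma latF_singleton {n : ℕ} (h : Γn n ≤ Γ) : latF Γ Γn {n} = Γn n := by
  simp [latF, inf_eq_right.mpr h]

lemma latF_le (F : Finset ℕ) : latF Γ Γn F ≤ Γ := inf_le_left

lemma latF_insert (n : ℕ) (F : Finset ℕ) :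
    latF Γ Γn (insert n F) = latF Γ Γn F ⊓ Γn n := by
  simp only [latF, Finset.inf_insert]
  rw [inf_left_comm, inf_comm (Γn n)]

lemma latF_sup_of_not_mem (hfam : IsCoprimeSublatticeFamily Γ Γn) {n : ℕ}
    {F : Finset ℕ} (hn : n ∉ F) : latF Γ Γn F ⊔ Γn n = Γ := by
  have h := hfam.gcdLaw F {n}
  rw [latF_singleton Γ Γn (hfam.proper n).le] at h
  have h2 : F ∩ {n} = ∅ := by
    rw [Finset.eq_empty_iff_forall_notMem]
    intro x hx
    rw [Finset.mem_inter, Finset.mem_singleton] at hx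
    exact hn (hx.2 ▸ hx.1)
  rwa [h2, latF_empty] at h

lemma index_latF (hfam : IsCoprimeSublatticeFamily Γ Γn) (F : Finset ℕ) :
    AddSubgroup.relIndex (latF Γ Γn F).toAddSubgroup Γ.toAddSubgroup
      = ∏ n ∈ F, latIndex Γ (Γn n) := by
  induction F using Finset.induction_on with
  | empty => simp [latF_empty, AddSubgroup.relIndex_self]
  | @insert n F hn ih =>
    rw [Finset.prod_insert hn, ← ih]
    rw [latF_insert, toAddSubgroup_inf]
    set A := (latF Γ Γn F).toAddSubgroup with hA
    set B := (Γn n).toAddSubgroup with hB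
    set L := Γ.toAddSubgroup with hL
    have hBL : B ⊓ L = B := inf_of_le_left (by
      rw [hB, hL]; exact fun x hx => (hfam.proper n).le hx)
    have hsupBA : B ⊔ A = L := by
      rw [hA, hB, hL, sup_comm, ← toAddSubgroup_sup,
        latF_sup_of_not_mem Γ Γn hfam hn]
    calc (A ⊓ B).relIndex L
        = A.relIndex (B ⊓ L) * B.relIndex L :=
          (AddSubgroup.relIndex_inf_mul_relIndex A B L).symm
      _ = A.relIndex (B ⊔ A) * B.relIndex L := by rw [hBL,
          AddSubgroup.relIndex_sup_right]
      _ = A.relIndex L * B.relIndex L := by rw [hsupBA]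
      _ = latIndex Γ (Γn n) * (A.relIndex L) := by
          rw [mul_comm]; rfl

lemma dual_latF (hfam : IsCoprimeSublatticeFamily Γ Γn) [DiscreteTopology Γ]
    [IsZLattice ℝ Γ] (F : Finset ℕ) :
    dualLattice (latF Γ Γn F)
      = dualLattice Γ ⊔ F.sup (fun n => dualLattice (Γn n)) := by
  induction F using Finset.induction_on with
  | empty => simp [latF_empty]
  | @insert n F hn ih =>
    rw [latF_insert,
      dualLattice_inf_of_sup_eq Γ _ _ (latF_sup_of_not_mem Γ Γn hfam hn), ih,
      Finset.sup_insert, sup_assoc, sup_comm (F.sup fun n => dualLattice (Γn n))]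

end Fam
section DualIndex
open Submodule Module
variable {d : ℕ}
set_option linter.unusedSectionVars false
set_option maxHeartbeats 1000000

lemma span_of_basis {d : ℕ} {G : Submodule ℤ (Euc d)} {N : Submodule ℤ ↥G}
    {ι : Type*} [Fintype ι] (bN : Basis ι ℤ ↥N) :
    N = span ℤ (Set.range fun i => (bN i : ↥G)) := by
  have h := congrArg (Submodule.map N.subtype) bN.span_eq
  rw [Submodule.map_span, ← Set.range_comp, Submodule.map_subtype_top] at h
  exact h.symm

lemma int_smul_injective : Function.Injective fun r : ℤ => r • (1 : ℝ) := by
  intro x y h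
  simp only [zsmul_eq_mul, mul_one] at h
  exact_mod_cast h

lemma dual_relIndex (Γ : Submodule ℤ (Euc d)) [DiscreteTopology Γ] [IsZLattice ℝ Γ]
    (Λ : Submodule ℤ (Euc d)) (hle : Λ ≤ Γ)
    (hfin : AddSubgroup.relIndex Λ.toAddSubgroup Γ.toAddSubgroup ≠ 0) :
    AddSubgroup.relIndex (dualLattice Γ).toAddSubgroup (dualLattice Λ).toAddSubgroup
      = AddSubgroup.relIndex Λ.toAddSubgroup Γ.toAddSubgroup := by
  classical
  have hfinite : Module.Finite ℤ Γ := ZLattice.module_finite ℝ Γ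
  have hfree : Module.Free ℤ Γ := ZLattice.module_free ℝ Γ
  set ι := Free.ChooseBasisIndex ℤ ↥Γ with hι
  let b : Basis ι ℤ ↥Γ := Free.chooseBasis ℤ ↥Γ
  set N : Submodule ℤ ↥Γ := Submodule.comap Γ.subtype Λ with hN
  obtain ⟨n, snf⟩ := N.smithNormalForm b
  have hbridge : AddSubgroup.relIndex Λ.toAddSubgroup Γ.toAddSubgroup
      = N.toAddSubgroup.index := rfl
  have hite := snf.toAddSubgroup_index_eq_ite
  have hn : n = Fintype.card ι := by
    by_contra hc
    rw [hbridge, hite, if_neg hc] at hfin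
    exact hfin rfl
  have hprimal : AddSubgroup.relIndex Λ.toAddSubgroup Γ.toAddSubgroup
      = ∏ i : Fin n, (Ideal.span {snf.a i}).toAddSubgroup.index := by
    rw [hbridge, hite, if_pos hn]
  have ha : ∀ i, snf.a i ≠ 0 := by
    intro i hzero
    have h1 := snf.snf i
    rw [hzero, zero_smul] at h1
    exact Basis.ne_zero snf.bN i (ZeroMemClass.coe_eq_zero.mp h1)
  have hbij : Function.Bijective snf.f :=
    (Fintype.bijective_iff_injective_and_card snf.f).mpr
      ⟨snf.f.injective, by rw [Fintype.card_fin, hn]⟩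
  set σ : Fin n ≃ ι := Equiv.ofBijective snf.f hbij with hσ
  set e' : Basis ι ℝ (Euc d) := snf.bM.ofZLatticeBasis ℝ Γ with he'
  set a' : ι → ℤ := fun j => snf.a (σ.symm j) with ha'def
  have ha' : ∀ j, a' j ≠ 0 := fun j => ha _
  have hΓspan : span ℤ (Set.range (e' : ι → Euc d)) = Γ :=
    snf.bM.ofZLatticeBasis_span ℝ
  -- Λ as a span
  have hΛspan : Λ = span ℤ (Set.range fun j : ι => a' j • e' j) := by
    have h1 : Λ = Submodule.map Γ.subtype N := by
      rw [hN, Submodule.map_comap_subtype, inf_of_le_right hle]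
    have h2 : N = span ℤ (Set.range fun i => ((snf.bN i : ↥Γ))) :=
      span_of_basis snf.bN
    rw [h1, h2, Submodule.map_span, ← Set.range_comp]
    congr 1
    have h3 : (Γ.subtype ∘ fun i => ((snf.bN i : ↥Γ))) =
        (fun j : ι => a' j • e' j) ∘ σ := by
      funext i
      have h4 := snf.snf i
      have h5 : ((snf.bN i : ↥Γ) : Euc d) = snf.a i • (snf.bM (snf.f i) : Euc d) := by
        rw [h4]; push_cast; rfl
      simp only [Function.comp_apply, Submodule.coe_subtype]
      rw [h5]
      have h6 : a' (σ i) = snf.a i := by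
        show snf.a (σ.symm (σ i)) = snf.a i
        rw [Equiv.symm_apply_apply]
      have h7 : e' (σ i) = (snf.bM (snf.f i) : Euc d) := by
        rw [he', Basis.ofZLatticeBasis_apply]
        rfl
      rw [h6, h7]
    rw [h3, Function.Surjective.range_comp σ.surjective]
  set u : ι → ℝˣ := fun j => Units.mk0 ((a' j : ℝ))
    (Int.cast_ne_zero.mpr (ha' j)) with hu
  set c' : Basis ι ℝ (Euc d) := e'.unitsSMul u with hc'def
  have hc' : ∀ j, c' j = a' j • e' j := by
    intro j
    rw [hc'def, Basis.unitsSMul_apply, Units.smul_def]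
    have hval : ((u j : ℝˣ) : ℝ) = (a' j : ℝ) := rfl
    rw [hval, Int.cast_smul_eq_zsmul]
  have hΛspan' : Λ = span ℤ (Set.range (c' : ι → Euc d)) := by
    have hfe : (c' : ι → Euc d) = fun j => a' j • e' j := funext hc'
    rw [hΛspan, ← hfe]
  have hdualΛ : dualLattice Λ = span ℤ (Set.range (dualVec c')) := by
    rw [hΛspan']; exact dualLattice_span_eq c'
  have hdualΓ : dualLattice Γ = span ℤ (Set.range (dualVec e')) := by
    rw [← hΓspan]; exact dualLattice_span_eq e'
  have hww : ∀ j, dualVec e' j = a' j • dualVec c' j := by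
    intro j
    rw [hc'def, dualVec_unitsSMul, ← Int.cast_smul_eq_zsmul ℝ, Units.smul_def,
      smul_smul]
    have hvalinv : (((u j)⁻¹ : ℝˣ) : ℝ) = ((a' j : ℝ))⁻¹ := rfl
    rw [hvalinv, mul_inv_cancel₀ (Int.cast_ne_zero.mpr (ha' j)), one_smul]
  have hliC : LinearIndependent ℤ (dualVec c') :=
    (dualVec_linearIndependent c').restrict_scalars int_smul_injective
  have hliE : LinearIndependent ℤ (dualVec e') :=
    (dualVec_linearIndependent e').restrict_scalars int_smul_injective
  set bMdual : Basis ι ℤ ↥(dualLattice Λ) :=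
    (Basis.span hliC).map (LinearEquiv.ofEq _ _ hdualΛ.symm) with hbMdual
  set bΓdual : Basis ι ℤ ↥(dualLattice Γ) :=
    (Basis.span hliE).map (LinearEquiv.ofEq _ _ hdualΓ.symm) with hbΓdual
  have hbMcoe : ∀ j, (bMdual j : Euc d) = dualVec c' j := by
    intro j
    rw [hbMdual, Basis.map_apply]
    have : ((LinearEquiv.ofEq _ _ hdualΛ.symm) (Basis.span hliC j) : Euc d)
        = ((Basis.span hliC j : Euc d)) := rfl
    rw [this, Basis.span_apply]
  have hbΓcoe : ∀ j, (bΓdual j : Euc d) = dualVec e' j := by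
    intro j
    rw [hbΓdual, Basis.map_apply]
    have : ((LinearEquiv.ofEq _ _ hdualΓ.symm) (Basis.span hliE j) : Euc d)
        = ((Basis.span hliE j : Euc d)) := rfl
    rw [this, Basis.span_apply]
  have hdle : dualLattice Γ ≤ dualLattice Λ := dualLattice_antitone hle
  set N' : Submodule ℤ ↥(dualLattice Λ) :=
    Submodule.comap (dualLattice Λ).subtype (dualLattice Γ) with hN'
  set bN' : Basis ι ℤ ↥N' :=
    bΓdual.map (Submodule.comapSubtypeEquivOfLe hdle).symm with hbN'
  have hbN'coe : ∀ j, ((bN' j : ↥(dualLattice Λ)) : Euc d) = dualVec e' j := by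
    intro j
    rw [← hbΓcoe j, hbN', Basis.map_apply]
    have h8 := Submodule.comapSubtypeEquivOfLe_apply_coe hdle
      ((Submodule.comapSubtypeEquivOfLe hdle).symm (bΓdual j))
    rw [LinearEquiv.apply_symm_apply] at h8
    exact h8.symm
  set τ : Fin (Fintype.card ι) ≃ ι := (Fintype.equivFin ι).symm with hτ
  set snf2 : Basis.SmithNormalForm N' ι (Fintype.card ι) :=
    ⟨bMdual, bN'.reindex τ.symm, τ.toEmbedding, fun i => a' (τ i), by
      intro i
      rw [Basis.reindex_apply, Equiv.symm_symm]
      apply Subtype.ext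
      show (((bN' (τ i)) : ↥(dualLattice Λ)) : Euc d)
        = ((a' (τ i) • bMdual (τ i) : ↥(dualLattice Λ)) : Euc d)
      rw [hbN'coe]
      push_cast
      rw [hbMcoe, ← hww]⟩ with hsnf2
  have hbridge2 : AddSubgroup.relIndex (dualLattice Γ).toAddSubgroup
      (dualLattice Λ).toAddSubgroup = N'.toAddSubgroup.index := rfl
  rw [hbridge2, snf2.toAddSubgroup_index_eq_ite, if_pos rfl, hprimal]
  calc ∏ i : Fin (Fintype.card ι), (Ideal.span {snf2.a i}).toAddSubgroup.index
      = ∏ j : ι, (Ideal.span {a' j}).toAddSubgroup.index :=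
        Fintype.prod_equiv τ _ _ (fun i => rfl)
    _ = ∏ i : Fin n, (Ideal.span {snf.a i}).toAddSubgroup.index :=
        Fintype.prod_equiv σ.symm _ _ (fun j => rfl)

end DualIndex
theorem stmt16 {d : ℕ} (Γ : Submodule ℤ (Euc d)) [DiscreteTopology Γ] [IsZLattice ℝ Γ]
    (Γn : ℕ → Submodule ℤ (Euc d)) (hfam : IsCoprimeSublatticeFamily Γ Γn) :
    (∀ F F' : Finset ℕ,
      dualLattice (latF Γ Γn F) =
        dualLattice Γ ⊔ F.sup (fun n => dualLattice (Γn n)) ∧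
      dualLattice (latF Γ Γn F) ⊓ dualLattice (latF Γ Γn F') =
        dualLattice (latF Γ Γn (F ∩ F')) ∧
      AddSubgroup.relIndex (dualLattice Γ).toAddSubgroup
          (dualLattice (latF Γ Γn F)).toAddSubgroup =
        ∏ n ∈ F, latIndex Γ (Γn n)) ∧
    ∀ k : Euc d, k ∈ ⋃ F : Finset ℕ, (dualLattice (latF Γ Γn F) : Set (Euc d)) →
      ∃ F₀ : Finset ℕ, k ∈ dualLattice (latF Γ Γn F₀) ∧
        ∀ F : Finset ℕ, k ∈ dualLattice (latF Γ Γn F) → F₀ ⊆ F := by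
  classical
  have part2 : ∀ F F' : Finset ℕ,
      dualLattice (latF Γ Γn F) ⊓ dualLattice (latF Γ Γn F') =
        dualLattice (latF Γ Γn (F ∩ F')) := by
    intro F F'
    rw [← hfam.gcdLaw F F', dualLattice_sup]
  constructor
  · intro F F'
    refine ⟨dual_latF Γ Γn hfam F, part2 F F', ?_⟩
    have hfin : AddSubgroup.relIndex (latF Γ Γn F).toAddSubgroup
        Γ.toAddSubgroup ≠ 0 := by
      rw [index_latF Γ Γn hfam F]
      exact Finset.prod_ne_zero_iff.mpr fun n _ => hfam.finiteIndex n
    rw [dual_relIndex Γ (latF Γ Γn F) (latF_le Γ Γn F) hfin,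
      index_latF Γ Γn hfam F]
  · intro k hk
    rw [Set.mem_iUnion] at hk
    obtain ⟨F, hF⟩ := hk
    have hex : ∃ c : ℕ, ∃ F : Finset ℕ,
        k ∈ dualLattice (latF Γ Γn F) ∧ F.card = c := ⟨F.card, F, hF, rfl⟩
    obtain ⟨F₀, hF₀, hcard⟩ := Nat.find_spec hex
    refine ⟨F₀, hF₀, ?_⟩
    intro F1 hF1
    have hmem : k ∈ dualLattice (latF Γ Γn (F₀ ∩ F1)) := by
      rw [← part2 F₀ F1]
      exact Submodule.mem_inf.mpr ⟨hF₀, hF1⟩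
    have hle : F₀.card ≤ (F₀ ∩ F1).card := by
      rw [hcard]
      exact Nat.find_min' hex ⟨F₀ ∩ F1, hmem, rfl⟩
    have heq : F₀ ∩ F1 = F₀ :=
      Finset.eq_of_subset_of_card_le Finset.inter_subset_left hle
    exact Finset.inter_eq_left.mp heq
end
end

section
/- The natural density of the set V of visible points of ℤ² exists along centred discs and equals 6/π², i.e. lim_{r→∞} card(V ∩ B_r(0)) / (π r²) = 6/π², where B_r(0) ⊂ ℝ² is the open disc of radius r centred at the origin. -/
open Filter Topology

noncomputable section VisibleAux
open MeasureTheory Finset ArithmeticFunction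
open scoped ArithmeticFunction.Moebius


/-- Lattice points in the open disc of radius `s`. -/
def vdisk (s : ℝ) : Finset (ℤ × ℤ) :=
  (Finset.Icc (-⌈s⌉, -⌈s⌉) (⌈s⌉, ⌈s⌉)).filter fun v => (v.1 : ℝ) ^ 2 + (v.2 : ℝ) ^ 2 < s ^ 2

lemma mem_vdisk {s : ℝ} (hs : 0 ≤ s) {v : ℤ × ℤ} :
    v ∈ vdisk s ↔ (v.1 : ℝ) ^ 2 + (v.2 : ℝ) ^ 2 < s ^ 2 := by
  simp only [vdisk, Finset.mem_filter, Finset.mem_Icc, and_iff_right_iff_imp]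
  intro h
  have h1 : |(v.1 : ℝ)| ≤ s := by nlinarith [sq_abs (v.1 : ℝ), abs_nonneg (v.1 : ℝ), sq_nonneg (v.2 : ℝ)]
  have h2 : |(v.2 : ℝ)| ≤ s := by nlinarith [sq_abs (v.2 : ℝ), abs_nonneg (v.2 : ℝ), sq_nonneg (v.1 : ℝ)]
  have hc : s ≤ (⌈s⌉ : ℝ) := Int.le_ceil s
  rw [abs_le] at h1 h2
  constructor
  · exact Prod.mk_le_mk.mpr ⟨by exact_mod_cast (by linarith : -(⌈s⌉:ℝ) ≤ (v.1:ℝ)),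
      by exact_mod_cast (by linarith : -(⌈s⌉:ℝ) ≤ (v.2:ℝ))⟩
  · exact Prod.mk_le_mk.mpr ⟨by exact_mod_cast (by linarith : (v.1:ℝ) ≤ (⌈s⌉:ℝ)),
      by exact_mod_cast (by linarith : (v.2:ℝ) ≤ (⌈s⌉:ℝ))⟩



/-- unit square at a lattice point -/
def vsq (v : ℤ × ℤ) : Set (ℝ × ℝ) :=
  Set.Ico (v.1 : ℝ) ((v.1 : ℝ) + 1) ×ˢ Set.Ico (v.2 : ℝ) ((v.2 : ℝ) + 1)

lemma vsq_meas (v : ℤ × ℤ) : MeasurableSet (vsq v) :=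
  measurableSet_Ico.prod measurableSet_Ico

lemma vsq_vol (v : ℤ × ℤ) : volume (vsq v) = 1 := by
  rw [vsq, Measure.volume_eq_prod, Measure.prod_prod, Real.volume_Ico, Real.volume_Ico]
  simp

lemma vsq_pairwise_disjoint (T : Finset (ℤ × ℤ)) :
    (T : Set (ℤ × ℤ)).PairwiseDisjoint vsq := by
  intro v _ w _ hvw
  refine Set.disjoint_left.mpr fun x hx hx' => hvw ?_
  simp only [vsq, Set.mem_prod, Set.mem_Ico] at hx hx'
  have h1 : v.1 = ⌊x.1⌋ := (Int.floor_eq_iff.mpr ⟨hx.1.1, hx.1.2⟩).symm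
  have h2 : w.1 = ⌊x.1⌋ := (Int.floor_eq_iff.mpr ⟨hx'.1.1, hx'.1.2⟩).symm
  have h3 : v.2 = ⌊x.2⌋ := (Int.floor_eq_iff.mpr ⟨hx.2.1, hx.2.2⟩).symm
  have h4 : w.2 = ⌊x.2⌋ := (Int.floor_eq_iff.mpr ⟨hx'.2.1, hx'.2.2⟩).symm
  exact Prod.ext (h1.trans h2.symm) (h3.trans h4.symm)

lemma vol_biUnion (T : Finset (ℤ × ℤ)) :
    volume (⋃ v ∈ T, vsq v) = T.card := by
  rw [measure_biUnion_finset (vsq_pairwise_disjoint T) fun v _ => vsq_meas v]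
  simp [vsq_vol]

/-- the open disc in `ℝ × ℝ` -/
def vdisc (s : ℝ) : Set (ℝ × ℝ) := {x | x.1 ^ 2 + x.2 ^ 2 < s ^ 2}

lemma vdisc_vol {s : ℝ} (hs : 0 ≤ s) :
    volume (vdisc s) = ENNReal.ofReal (Real.pi * s ^ 2) := by
  have hpre : Complex.measurableEquivRealProd ⁻¹' (vdisc s) = Metric.ball (0 : ℂ) s := by
    ext z
    simp only [Set.mem_preimage, vdisc, Set.mem_setOf_eq, Metric.mem_ball,
      Complex.dist_eq, sub_zero]
    change z.re ^ 2 + z.im ^ 2 < s ^ 2 ↔ _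
    have h := Complex.sq_norm z
    rw [Complex.normSq_apply] at h
    constructor
    · intro hlt
      nlinarith [norm_nonneg z]
    · intro hlt
      nlinarith [norm_nonneg z]
  have hmeas : MeasurableSet (vdisc s) := by
    have hcont : Continuous fun x : ℝ × ℝ => x.1 ^ 2 + x.2 ^ 2 := by fun_prop
    exact (isOpen_lt hcont continuous_const).measurableSet
  rw [← Complex.volume_preserving_equiv_real_prod.measure_preimage hmeas.nullMeasurableSet,
    hpre, Complex.volume_ball]
  rw [ENNReal.ofReal_mul Real.pi_nonneg, mul_comm, ← ENNReal.ofReal_pow hs]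
  rw [← NNReal.coe_real_pi, ENNReal.ofReal_coe_nnreal]


-- placeholders (copied from a,b)

lemma abs_le_of_sq_add {a b s : ℝ} (hs : 0 ≤ s) (h : a ^ 2 + b ^ 2 < s ^ 2) : |a| ≤ s := by
  nlinarith [sq_abs a, abs_nonneg a, sq_nonneg b]

lemma union_subset_disc {s : ℝ} (hs : 0 ≤ s) :
    (⋃ v ∈ vdisk s, vsq v) ⊆ vdisc (s + 2) := by
  intro x hx
  simp only [Set.mem_iUnion] at hx
  obtain ⟨v, hv, hxv⟩ := hx
  rw [mem_vdisk hs] at hv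
  simp only [vsq, Set.mem_prod, Set.mem_Ico] at hxv
  have hA : |(v.1 : ℝ)| ≤ s := abs_le_of_sq_add hs hv
  have hB : |(v.2 : ℝ)| ≤ s := by
    rw [add_comm] at hv; exact abs_le_of_sq_add hs hv
  have ha : |x.1| < |(v.1 : ℝ)| + 1 := by
    have h1 : |x.1 - (v.1 : ℝ)| < 1 := abs_lt.mpr ⟨by linarith [hxv.1.1], by linarith [hxv.1.2]⟩
    calc |x.1| = |(v.1 : ℝ) + (x.1 - v.1)| := by ring_nf
    _ ≤ |(v.1 : ℝ)| + |x.1 - (v.1 : ℝ)| := abs_add_le _ _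
    _ < |(v.1 : ℝ)| + 1 := by linarith
  have hb : |x.2| < |(v.2 : ℝ)| + 1 := by
    have h1 : |x.2 - (v.2 : ℝ)| < 1 := abs_lt.mpr ⟨by linarith [hxv.2.1], by linarith [hxv.2.2]⟩
    calc |x.2| = |(v.2 : ℝ) + (x.2 - v.2)| := by ring_nf
    _ ≤ |(v.2 : ℝ)| + |x.2 - (v.2 : ℝ)| := abs_add_le _ _
    _ < |(v.2 : ℝ)| + 1 := by linarith
  have ha2 : x.1 ^ 2 < (|(v.1 : ℝ)| + 1) ^ 2 := by
    rw [← sq_abs]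
    exact pow_lt_pow_left₀ ha (abs_nonneg _) two_ne_zero
  have hb2 : x.2 ^ 2 < (|(v.2 : ℝ)| + 1) ^ 2 := by
    rw [← sq_abs]
    exact pow_lt_pow_left₀ hb (abs_nonneg _) two_ne_zero
  show x.1 ^ 2 + x.2 ^ 2 < (s + 2) ^ 2
  nlinarith [sq_abs (v.1 : ℝ), sq_abs (v.2 : ℝ), abs_nonneg (v.1 : ℝ), abs_nonneg (v.2 : ℝ)]

lemma disc_subset_union {s : ℝ} (hs : 0 ≤ s) :
    vdisc s ⊆ ⋃ v ∈ vdisk (s + 2), vsq v := by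
  intro x hx
  have hx' : x.1 ^ 2 + x.2 ^ 2 < s ^ 2 := hx
  have hA : |x.1| ≤ s := abs_le_of_sq_add hs hx'
  have hB : |x.2| ≤ s := by rw [add_comm] at hx'; exact abs_le_of_sq_add hs hx'
  refine Set.mem_iUnion.mpr ⟨(⌊x.1⌋, ⌊x.2⌋), Set.mem_iUnion.mpr ⟨?_, ?_⟩⟩
  · rw [mem_vdisk (by linarith)]
    have ha : |(⌊x.1⌋ : ℝ)| < |x.1| + 1 := by
      have h1 : |(⌊x.1⌋ : ℝ) - x.1| < 1 := abs_lt.mpr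
        ⟨by linarith [Int.lt_floor_add_one x.1], by linarith [Int.floor_le x.1]⟩
      calc |(⌊x.1⌋ : ℝ)| = |x.1 + ((⌊x.1⌋ : ℝ) - x.1)| := by ring_nf
      _ ≤ |x.1| + |(⌊x.1⌋ : ℝ) - x.1| := abs_add_le _ _
      _ < |x.1| + 1 := by linarith
    have hb : |(⌊x.2⌋ : ℝ)| < |x.2| + 1 := by
      have h1 : |(⌊x.2⌋ : ℝ) - x.2| < 1 := abs_lt.mpr
        ⟨by linarith [Int.lt_floor_add_one x.2], by linarith [Int.floor_le x.2]⟩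
      calc |(⌊x.2⌋ : ℝ)| = |x.2 + ((⌊x.2⌋ : ℝ) - x.2)| := by ring_nf
      _ ≤ |x.2| + |(⌊x.2⌋ : ℝ) - x.2| := abs_add_le _ _
      _ < |x.2| + 1 := by linarith
    have ha2 : (⌊x.1⌋ : ℝ) ^ 2 < (|x.1| + 1) ^ 2 := by
      rw [← sq_abs]; exact pow_lt_pow_left₀ ha (abs_nonneg _) two_ne_zero
    have hb2 : (⌊x.2⌋ : ℝ) ^ 2 < (|x.2| + 1) ^ 2 := by
      rw [← sq_abs]; exact pow_lt_pow_left₀ hb (abs_nonneg _) two_ne_zero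
    show ((⌊x.1⌋ : ℝ)) ^ 2 + ((⌊x.2⌋ : ℝ)) ^ 2 < (s + 2) ^ 2
    nlinarith [sq_abs x.1, sq_abs x.2, abs_nonneg x.1, abs_nonneg x.2]
  · exact Set.mem_prod.mpr ⟨⟨Int.floor_le x.1, Int.lt_floor_add_one x.1⟩,
      ⟨Int.floor_le x.2, Int.lt_floor_add_one x.2⟩⟩

lemma vdisk_card_le {s : ℝ} (hs : 0 ≤ s) :
    ((vdisk s).card : ℝ) ≤ Real.pi * (s + 2) ^ 2 := by
  have h : volume (⋃ v ∈ vdisk s, vsq v) ≤ volume (vdisc (s + 2)) := measure_mono (union_subset_disc hs)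
  rw [vol_biUnion, vdisc_vol (by linarith : (0:ℝ) ≤ s + 2)] at h
  have := ENNReal.toReal_mono (by simp) h
  rwa [ENNReal.toReal_natCast, ENNReal.toReal_ofReal (by positivity)] at this

lemma le_vdisk_card {s : ℝ} (hs : 0 ≤ s) :
    Real.pi * s ^ 2 ≤ ((vdisk (s + 2)).card : ℝ) := by
  have h : volume (vdisc s) ≤ volume (⋃ v ∈ vdisk (s + 2), vsq v) := measure_mono (disc_subset_union hs)
  rw [vol_biUnion, vdisc_vol hs] at h
  have := ENNReal.toReal_mono (by simp) h
  rwa [ENNReal.toReal_natCast, ENNReal.toReal_ofReal (by positivity)] at this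

lemma vdisk_card_tendsto :
    Tendsto (fun s : ℝ => ((vdisk s).card : ℝ) / s ^ 2) atTop (𝓝 Real.pi) := by
  have hup : Tendsto (fun s : ℝ => Real.pi * (s + 2) ^ 2 / s ^ 2) atTop (𝓝 Real.pi) := by
    have h1 : Tendsto (fun s : ℝ => (1 + 2 / s) ^ 2) atTop (𝓝 ((1 + 0) ^ 2)) := by
      exact ((tendsto_const_nhds.add (tendsto_const_nhds.div_atTop tendsto_id)).pow 2)
    have h2 : Tendsto (fun s : ℝ => Real.pi * (1 + 2 / s) ^ 2) atTop (𝓝 (Real.pi * (1 + 0) ^ 2)) :=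
      tendsto_const_nhds.mul h1
    simp only [add_zero, one_pow, mul_one] at h2
    refine h2.congr' ?_
    filter_upwards [eventually_gt_atTop (0 : ℝ)] with s hs
    field_simp
  have hlo : Tendsto (fun s : ℝ => Real.pi * (s - 2) ^ 2 / s ^ 2) atTop (𝓝 Real.pi) := by
    have h1 : Tendsto (fun s : ℝ => (1 - 2 / s) ^ 2) atTop (𝓝 ((1 - 0) ^ 2)) :=
      ((tendsto_const_nhds.sub (tendsto_const_nhds.div_atTop tendsto_id)).pow 2)
    have h2 : Tendsto (fun s : ℝ => Real.pi * (1 - 2 / s) ^ 2) atTop (𝓝 (Real.pi * (1 - 0) ^ 2)) :=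
      tendsto_const_nhds.mul h1
    simp only [sub_zero, one_pow, mul_one] at h2
    refine h2.congr' ?_
    filter_upwards [eventually_gt_atTop (0 : ℝ)] with s hs
    field_simp
  refine tendsto_of_tendsto_of_tendsto_of_le_of_le' hlo hup ?_ ?_
  · filter_upwards [eventually_ge_atTop (2 : ℝ)] with s hs
    have h := le_vdisk_card (by linarith : (0:ℝ) ≤ s - 2)
    rw [sub_add_cancel] at h
    gcongr
  · filter_upwards [eventually_ge_atTop (2 : ℝ)] with s hs
    have h := vdisk_card_le (by linarith : (0:ℝ) ≤ s)
    gcongr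



/-- nonzero lattice points in the disc -/
def nzd (s : ℝ) : Finset (ℤ × ℤ) := (vdisk s).filter fun v => v ≠ 0

/-- visible (coprime) lattice points in the disc -/
def vcop (s : ℝ) : Finset (ℤ × ℤ) := (vdisk s).filter fun v => Int.gcd v.1 v.2 = 1

lemma one_le_sq_sum {v : ℤ × ℤ} (hv0 : v ≠ 0) :
    (1 : ℝ) ≤ (v.1 : ℝ) ^ 2 + (v.2 : ℝ) ^ 2 := by
  have hor : v.1 ≠ 0 ∨ v.2 ≠ 0 := by
    by_contra h
    push_neg at h
    exact hv0 (Prod.ext h.1 h.2)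
  rcases hor with h | h
  · have h1 : (1 : ℝ) ≤ |(v.1 : ℝ)| := by exact_mod_cast Int.one_le_abs h
    nlinarith [sq_nonneg (v.2 : ℝ), sq_abs (v.1 : ℝ)]
  · have h1 : (1 : ℝ) ≤ |(v.2 : ℝ)| := by exact_mod_cast Int.one_le_abs h
    nlinarith [sq_nonneg (v.1 : ℝ), sq_abs (v.2 : ℝ)]

lemma mem_nzd {s : ℝ} (hs : 0 ≤ s) {v : ℤ × ℤ} :
    v ∈ nzd s ↔ ((v.1 : ℝ) ^ 2 + (v.2 : ℝ) ^ 2 < s ^ 2 ∧ v ≠ 0) := by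
  rw [nzd, Finset.mem_filter, mem_vdisk hs]

lemma nzd_eq_empty {s : ℝ} (hs0 : 0 ≤ s) (hs : s ≤ 1) : nzd s = ∅ := by
  ext v
  simp only [Finset.notMem_empty, iff_false, nzd, Finset.mem_filter, vdisk, not_and]
  intro hv hv0
  have h1 := one_le_sq_sum hv0
  have h2 := hv.2
  nlinarith [sq_nonneg s, sq_nonneg (1 - s)]

/-- scaling bijection: nonzero points in disc `s` correspond to points of `nzd (d*s)`
 both of whose coordinates are divisible by `d`. -/
lemma nzd_scale_card {d : ℕ} (hd : 1 ≤ d) {s : ℝ} (hs : 0 ≤ s) :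
    (nzd s).card = ((nzd (d * s)).filter fun w => (d : ℤ) ∣ w.1 ∧ (d : ℤ) ∣ w.2).card := by
  have hd0 : (0 : ℝ) < d := by exact_mod_cast hd
  refine Finset.card_bij (fun v _ => ((d : ℤ) * v.1, (d : ℤ) * v.2)) ?_ ?_ ?_
  · intro v hv
    rw [mem_nzd hs] at hv
    rw [Finset.mem_filter, mem_nzd (by positivity)]
    refine ⟨⟨?_, ?_⟩, ⟨v.1, rfl⟩, ⟨v.2, rfl⟩⟩
    · have key := mul_lt_mul_of_pos_left hv.1 (show (0:ℝ) < (d:ℝ)^2 by positivity)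
      push_cast
      nlinarith [key]
    · intro h
      have h1 : (d : ℤ) * v.1 = 0 := by
        simpa using congrArg Prod.fst h
      have h2 : (d : ℤ) * v.2 = 0 := by
        simpa using congrArg Prod.snd h
      have hdz : (d : ℤ) ≠ 0 := by positivity
      exact hv.2 (Prod.ext (by simpa [hdz, show d ≠ 0 by omega] using h1) (by simpa [hdz, show d ≠ 0 by omega] using h2))
  · intro v hv w hw h
    have h1 := congrArg Prod.fst h
    have h2 := congrArg Prod.snd h
    simp only at h1 h2
    have hdz : (d : ℤ) ≠ 0 := by positivity
    exact Prod.ext (mul_left_cancel₀ hdz h1) (mul_left_cancel₀ hdz h2)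
  · rintro w hw
    rw [Finset.mem_filter, mem_nzd (by positivity)] at hw
    obtain ⟨⟨hwlt, hw0⟩, ⟨a, ha⟩, ⟨b, hb⟩⟩ := hw
    refine ⟨(a, b), ?_, by simp [← ha, ← hb]⟩
    rw [mem_nzd hs]
    constructor
    · have hda : (w.1 : ℝ) = d * a := by exact_mod_cast congrArg Int.cast ha
      have hdb : (w.2 : ℝ) = d * b := by exact_mod_cast congrArg Int.cast hb
      rw [hda, hdb] at hwlt
      have : (d : ℝ) ^ 2 * ((a : ℝ) ^ 2 + (b : ℝ) ^ 2) < (d : ℝ) ^ 2 * s ^ 2 := by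
        nlinarith
      exact lt_of_mul_lt_mul_left this (by positivity)
    · intro h0
      have ha0 : a = 0 := by simpa using congrArg Prod.fst h0
      have hb0 : b = 0 := by simpa using congrArg Prod.snd h0
      refine hw0 (Prod.ext ?_ ?_)
      · rw [ha, ha0, mul_zero]; rfl
      · rw [hb, hb0, mul_zero]; rfl



lemma abs_lt_of_sq_add {a b s : ℝ} (hs : 0 ≤ s) (h : a ^ 2 + b ^ 2 < s ^ 2) : |a| < s := by
  nlinarith [sq_abs a, abs_nonneg a, sq_nonneg b]

lemma gcd_lt_of_mem_nzd {r : ℝ} (hr : 0 ≤ r) {w : ℤ × ℤ} (hw : w ∈ nzd r) :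
    (Int.gcd w.1 w.2 : ℝ) < r := by
  rw [mem_nzd hr] at hw
  obtain ⟨hlt, hw0⟩ := hw
  rcases eq_or_ne w.1 0 with h1 | h1
  · have h2 : w.2 ≠ 0 := fun h2 => hw0 (Prod.ext h1 h2)
    have : Int.gcd w.1 w.2 = w.2.natAbs := by rw [h1]; simp [Int.gcd]
    rw [this]
    have : (w.2.natAbs : ℝ) = |(w.2 : ℝ)| := by
      rw [Nat.cast_natAbs, Int.cast_abs]
    rw [this]
    rw [add_comm] at hlt
    exact abs_lt_of_sq_add hr hlt
  · have hdvd : Int.gcd w.1 w.2 ∣ w.1.natAbs := by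
      rw [Int.gcd]; exact Nat.gcd_dvd_left _ _
    have hg : Int.gcd w.1 w.2 ≤ w.1.natAbs :=
      Nat.le_of_dvd (Int.natAbs_pos.mpr h1) hdvd
    have h2 : ((w.1.natAbs : ℝ)) = |(w.1 : ℝ)| := by
      rw [Nat.cast_natAbs, Int.cast_abs]
    calc (Int.gcd w.1 w.2 : ℝ) ≤ (w.1.natAbs : ℝ) := by exact_mod_cast hg
      _ = |(w.1 : ℝ)| := h2
      _ < r := abs_lt_of_sq_add hr hlt

lemma vcop_card_eq {r : ℝ} (hr : 1 ≤ r) :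
    ((vcop r).card : ℤ) =
      ∑ d ∈ Finset.Icc 1 ⌈r⌉₊, (μ d : ℤ) * ((nzd (r / d)).card : ℤ) := by
  have h0 : (0 : ℝ) ≤ r := by linarith
  have step1 : ∀ d ∈ Finset.Icc 1 ⌈r⌉₊,
      (μ d : ℤ) * ((nzd (r / d)).card : ℤ) =
      (μ d : ℤ) * (((nzd r).filter fun w => (d : ℤ) ∣ w.1 ∧ (d : ℤ) ∣ w.2).card : ℤ) := by
    intro d hd
    rw [Finset.mem_Icc] at hd
    have hd1 : 1 ≤ d := hd.1
    have hdr : (0 : ℝ) < d := by exact_mod_cast hd1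
    have := nzd_scale_card hd1 (s := r / d) (by positivity)
    rw [mul_div_cancel₀ r (ne_of_gt hdr)] at this
    rw [this]
  rw [Finset.sum_congr rfl step1]
  -- expand cards as sums and swap
  have expand : ∀ d : ℕ,
      (μ d : ℤ) * (((nzd r).filter fun w => (d : ℤ) ∣ w.1 ∧ (d : ℤ) ∣ w.2).card : ℤ)
      = ∑ w ∈ nzd r, (if (d : ℤ) ∣ w.1 ∧ (d : ℤ) ∣ w.2 then (μ d : ℤ) else 0) := by
    intro d
    rw [Finset.card_filter]
    push_cast
    rw [Finset.mul_sum]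
    exact Finset.sum_congr rfl fun w _ => by split <;> simp
  rw [Finset.sum_congr rfl fun d _ => expand d, Finset.sum_comm]
  have inner : ∀ w ∈ nzd r,
      (∑ d ∈ Finset.Icc 1 ⌈r⌉₊, if (d : ℤ) ∣ w.1 ∧ (d : ℤ) ∣ w.2 then (μ d : ℤ) else 0)
      = if Int.gcd w.1 w.2 = 1 then 1 else 0 := by
    intro w hw
    have hw' := (mem_nzd h0).mp hw
    have hg0 : Int.gcd w.1 w.2 ≠ 0 := by
      intro h
      rcases Int.gcd_eq_zero_iff.mp h with ⟨h1, h2⟩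
      exact hw'.2 (Prod.ext h1 h2)
    have hgpos : 0 < Int.gcd w.1 w.2 := Nat.pos_of_ne_zero hg0
    rw [← Finset.sum_filter]
    have hset : (Finset.Icc 1 ⌈r⌉₊).filter (fun d : ℕ => ((d : ℤ) ∣ w.1 ∧ (d : ℤ) ∣ w.2))
        = (Int.gcd w.1 w.2).divisors := by
      ext d
      simp only [Finset.mem_filter, Finset.mem_Icc, Nat.mem_divisors]
      constructor
      · rintro ⟨⟨_, _⟩, hd1, hd2⟩
        exact ⟨Int.dvd_gcd hd1 hd2, hg0⟩
      · rintro ⟨hdvd, _⟩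
        have hd1 : 1 ≤ d := Nat.pos_of_dvd_of_pos hdvd hgpos
        have hdle : d ≤ Int.gcd w.1 w.2 := Nat.le_of_dvd hgpos hdvd
        have hgr : (Int.gcd w.1 w.2 : ℝ) < r := gcd_lt_of_mem_nzd h0 hw
        have hdM : d ≤ ⌈r⌉₊ := by
          have : (d : ℝ) ≤ (⌈r⌉₊ : ℝ) :=
            le_trans (by exact_mod_cast hdle) (le_trans hgr.le (Nat.le_ceil r))
          exact_mod_cast this
        have hcast : (d : ℤ) ∣ (Int.gcd w.1 w.2 : ℤ) := Int.natCast_dvd_natCast.mpr hdvd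
        exact ⟨⟨hd1, hdM⟩, hcast.trans (Int.gcd_dvd_left _ _),
          hcast.trans (Int.gcd_dvd_right _ _)⟩
    rw [hset]
    have happ := coe_mul_zeta_apply (R := ℤ) (f := μ) (x := Int.gcd w.1 w.2)
    rw [← happ, moebius_mul_coe_zeta, one_apply]
  rw [Finset.sum_congr rfl inner, ← Finset.sum_filter]
  have hfs : (nzd r).filter (fun w => Int.gcd w.1 w.2 = 1) = vcop r := by
    rw [nzd, vcop, Finset.filter_filter]
    apply Finset.filter_congr
    intro v _
    simp only [ne_eq, and_iff_right_iff_imp]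
    intro hg hv0
    rw [hv0] at hg
    simp [Int.gcd] at hg
  rw [hfs, Finset.sum_const]
  simp



lemma moebius_summable : Summable (fun d : ℕ => (μ d : ℝ) / (d : ℝ) ^ 2) := by
  apply Summable.of_abs
  apply Summable.of_nonneg_of_le (fun d => abs_nonneg _) (fun d => ?_)
    ((Real.summable_one_div_nat_pow (p := 2)).mpr one_lt_two)
  rcases eq_or_ne d 0 with rfl | hd
  · simp
  · rw [abs_div, abs_of_nonneg (by positivity : (0:ℝ) ≤ (d:ℝ)^2)]
    gcongr
    exact_mod_cast ArithmeticFunction.abs_moebius_le_one (n := d)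

lemma moebius_tsum : (∑' d : ℕ, (μ d : ℝ) / (d : ℝ) ^ 2) = 6 / Real.pi ^ 2 := by
  have hzeta : riemannZeta 2 = (Real.pi : ℂ) ^ 2 / 6 := riemannZeta_two
  have hre : (1 : ℝ) < (2 : ℂ).re := by norm_num
  have hmul := ArithmeticFunction.LSeries_zeta_mul_Lseries_moebius hre
  rw [LSeries_zeta_eq_riemannZeta hre, hzeta] at hmul
  have hpi : ((Real.pi : ℂ) ^ 2 / 6) ≠ 0 := by
    simp [Real.pi_ne_zero]
  have hp : (Real.pi : ℂ) ≠ 0 := by exact_mod_cast Real.pi_ne_zero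
  have hL : LSeries (fun n => (μ n : ℂ)) 2 = 6 / (Real.pi : ℂ) ^ 2 := by
    field_simp at hmul ⊢
    linear_combination hmul
  have hterm : ∀ n : ℕ, LSeries.term (fun n => (μ n : ℂ)) 2 n
      = ((μ n : ℝ) / (n : ℝ) ^ 2 : ℝ) := by
    intro n
    rcases eq_or_ne n 0 with rfl | hn
    · simp [LSeries.term]
    · rw [LSeries.term_of_ne_zero hn, show ((2:ℂ)) = ((2:ℕ):ℂ) by norm_num,
        Complex.cpow_natCast]
      push_cast
      ring
  have : LSeries (fun n => (μ n : ℂ)) 2 = ((∑' d : ℕ, (μ d : ℝ) / (d : ℝ) ^ 2 : ℝ) : ℂ) := by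
    rw [LSeries]
    rw [tsum_congr hterm]
    exact (Complex.ofReal_tsum _).symm
  rw [this] at hL
  have : ((∑' d : ℕ, (μ d : ℝ) / (d : ℝ) ^ 2 : ℝ) : ℂ) = ((6 / Real.pi ^ 2 : ℝ) : ℂ) := by
    rw [hL]; push_cast; ring
  exact_mod_cast this



lemma nzd_card_le {s : ℝ} (hs : 0 ≤ s) :
    ((nzd s).card : ℝ) ≤ Real.pi * (s + 2) ^ 2 :=
  le_trans (by exact_mod_cast Nat.cast_le.mpr (Finset.card_filter_le _ _)) (vdisk_card_le hs)

lemma nzd_card_tendsto :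
    Tendsto (fun s : ℝ => ((nzd s).card : ℝ) / s ^ 2) atTop (𝓝 Real.pi) := by
  have key : Tendsto (fun s : ℝ => ((vdisk s).card : ℝ) / s ^ 2 - 1 / s ^ 2) atTop
      (𝓝 (Real.pi - 0)) := by
    refine vdisk_card_tendsto.sub ?_
    exact tendsto_const_nhds.div_atTop (tendsto_pow_atTop two_ne_zero)
  rw [sub_zero] at key
  refine key.congr' ?_
  filter_upwards [eventually_gt_atTop (0 : ℝ)] with s hs
  have h0mem : (0 : ℤ × ℤ) ∈ vdisk s := by
    rw [mem_vdisk hs.le]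
    simpa using pow_pos hs 2
  have : nzd s = (vdisk s).erase 0 := by
    rw [nzd]
    ext v
    simp [Finset.mem_erase, Finset.mem_filter, and_comm]
  rw [this, Finset.card_erase_of_mem h0mem]
  have hc : 1 ≤ (vdisk s).card := Finset.card_pos.mpr ⟨0, h0mem⟩
  rw [Nat.cast_sub hc]
  push_cast
  ring

/-- the summand -/
def Fterm (r : ℝ) (d : ℕ) : ℝ := (μ d : ℝ) * ((nzd (r / d)).card : ℝ) / r ^ 2

lemma Fterm_sum {r : ℝ} (hr : 1 ≤ r) :
    (∑' d : ℕ, Fterm r d) = ((vcop r).card : ℝ) / r ^ 2 := by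
  have hr0 : (0 : ℝ) < r := by linarith
  have hvanish : ∀ d ∉ Finset.Icc 1 ⌈r⌉₊, Fterm r d = 0 := by
    intro d hd
    rw [Finset.mem_Icc, not_and_or] at hd
    rcases hd with hd | hd
    · have : d = 0 := by omega
      subst this
      simp [Fterm]
    · push_neg at hd
      have hdr : r ≤ (d : ℝ) := le_trans (Nat.le_ceil r) (by exact_mod_cast hd.le)
      have hdiv : r / d ≤ 1 := div_le_one_of_le₀ hdr (by positivity)
      rw [Fterm, nzd_eq_empty (by positivity) hdiv]
      simp
  rw [tsum_eq_sum hvanish]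
  have := vcop_card_eq hr
  have hcast : ((vcop r).card : ℝ) =
      ∑ d ∈ Finset.Icc 1 ⌈r⌉₊, (μ d : ℝ) * ((nzd (r / d)).card : ℝ) := by
    exact_mod_cast congrArg (Int.cast : ℤ → ℝ) this
  rw [hcast, Finset.sum_div]
  rfl

lemma Fterm_tendsto (d : ℕ) :
    Tendsto (fun r => Fterm r d) atTop (𝓝 ((μ d : ℝ) * Real.pi / (d : ℝ) ^ 2)) := by
  rcases eq_or_ne d 0 with rfl | hd
  · simp only [Fterm, ArithmeticFunction.map_zero]
    simpa using tendsto_const_nhds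
  · have hd0 : (0 : ℝ) < d := by positivity
    have hcomp : Tendsto (fun r : ℝ => r / d) atTop atTop :=
      tendsto_id.atTop_div_const hd0
    have h1 : Tendsto (fun r : ℝ => ((nzd (r / d)).card : ℝ) / (r / d) ^ 2) atTop
        (𝓝 Real.pi) := nzd_card_tendsto.comp hcomp
    have h2 : Tendsto
        (fun r : ℝ => (μ d : ℝ) * (((nzd (r / d)).card : ℝ) / (r / d) ^ 2) / (d : ℝ) ^ 2)
        atTop (𝓝 ((μ d : ℝ) * Real.pi / (d : ℝ) ^ 2)) :=
      (h1.const_mul _).div_const _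
    refine h2.congr' ?_
    filter_upwards [eventually_gt_atTop (0 : ℝ)] with r hr
    rw [Fterm]
    field_simp

lemma bound_summable : Summable (fun d : ℕ => 9 * Real.pi / (d : ℝ) ^ 2) := by
  have := (Real.summable_one_div_nat_pow (p := 2)).mpr one_lt_two
  exact (this.mul_left (9 * Real.pi)).congr fun d => by ring

lemma Fterm_bound : ∀ᶠ r : ℝ in atTop, ∀ d : ℕ, |Fterm r d| ≤ 9 * Real.pi / (d : ℝ) ^ 2 := by
  filter_upwards [eventually_ge_atTop (1 : ℝ)] with r hr d
  have hr0 : (0 : ℝ) < r := by linarith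
  rcases eq_or_ne d 0 with rfl | hd
  · simp [Fterm]
  · have hd0 : (0 : ℝ) < d := by positivity
    rcases le_or_gt (r / d) 1 with hle | hgt
    · rw [Fterm, nzd_eq_empty (by positivity) hle]
      simp [Finset.card_empty]
      positivity
    · have hcard : ((nzd (r / d)).card : ℝ) ≤ Real.pi * (r / d + 2) ^ 2 :=
        nzd_card_le (by positivity)
      have hq : (r / d + 2) ^ 2 ≤ 9 * (r / d) ^ 2 := by nlinarith [hgt]
      have h9 : Real.pi * (r / d + 2) ^ 2 ≤ 9 * Real.pi * (r / d) ^ 2 := by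
        calc Real.pi * (r / d + 2) ^ 2 ≤ Real.pi * (9 * (r / d) ^ 2) := by
              gcongr
          _ = 9 * Real.pi * (r / d) ^ 2 := by ring
      have habs : |Fterm r d| ≤ ((nzd (r / d)).card : ℝ) / r ^ 2 := by
        rw [Fterm, abs_div, abs_of_nonneg (by positivity : (0:ℝ) ≤ r ^ 2), abs_mul,
          Nat.abs_cast]
        gcongr
        calc |(μ d : ℝ)| * ((nzd (r / d)).card : ℝ)
            ≤ 1 * ((nzd (r / d)).card : ℝ) := by
              gcongr
              exact_mod_cast ArithmeticFunction.abs_moebius_le_one (n := d)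
          _ = _ := one_mul _
      refine habs.trans ?_
      calc ((nzd (r / d)).card : ℝ) / r ^ 2 ≤ 9 * Real.pi * (r / d) ^ 2 / r ^ 2 := by
            gcongr
            exact hcard.trans h9
        _ = 9 * Real.pi / (d : ℝ) ^ 2 := by field_simp

/-- The natural density of the visible points of `ℤ²` exists along centred open discs
and equals `6/π²`: `lim_{r→∞} card(V ∩ B_r(0)) / (π r²) = 6/π²`. -/
theorem stmt18 :
    Tendsto (fun r : ℝ =>
        (Nat.card ↥{v : ℤ × ℤ | Int.gcd v.1 v.2 = 1 ∧
            (v.1 : ℝ) ^ 2 + (v.2 : ℝ) ^ 2 < r ^ 2} : ℝ) / (Real.pi * r ^ 2))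
      atTop (nhds (6 / Real.pi ^ 2)) := by
  have hmain : Tendsto (fun r : ℝ => ∑' d : ℕ, Fterm r d) atTop
      (𝓝 (∑' d : ℕ, (μ d : ℝ) * Real.pi / (d : ℝ) ^ 2)) :=
    tendsto_tsum_of_dominated_convergence bound_summable Fterm_tendsto
      (by simpa [Real.norm_eq_abs] using Fterm_bound)
  have hval : (∑' d : ℕ, (μ d : ℝ) * Real.pi / (d : ℝ) ^ 2) = 6 / Real.pi := by
    have : ∀ d : ℕ, (μ d : ℝ) * Real.pi / (d : ℝ) ^ 2
        = Real.pi * ((μ d : ℝ) / (d : ℝ) ^ 2) := fun d => by ring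
    rw [tsum_congr this, tsum_mul_left, moebius_tsum]
    rw [eq_div_iff Real.pi_ne_zero]
    field_simp
  rw [hval] at hmain
  have hcop : Tendsto (fun r : ℝ => ((vcop r).card : ℝ) / r ^ 2) atTop (𝓝 (6 / Real.pi)) := by
    refine hmain.congr' ?_
    filter_upwards [eventually_ge_atTop (1 : ℝ)] with r hr
    exact Fterm_sum hr
  have hfinal := hcop.div_const Real.pi
  have : (6 / Real.pi) / Real.pi = 6 / Real.pi ^ 2 := by
    rw [div_div, ← sq]
  rw [this] at hfinal
  refine hfinal.congr' ?_
  filter_upwards [eventually_ge_atTop (1 : ℝ)] with r hr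
  have hr0 : (0 : ℝ) ≤ r := by linarith
  have hset : {v : ℤ × ℤ | Int.gcd v.1 v.2 = 1 ∧
      (v.1 : ℝ) ^ 2 + (v.2 : ℝ) ^ 2 < r ^ 2} = ↑(vcop r) := by
    ext v
    simp only [Set.mem_setOf_eq, Finset.coe_filter, vcop, mem_vdisk hr0]
    tauto
  rw [hset, Nat.card_coe_set_eq, Set.ncard_coe_finset, mul_comm Real.pi (r ^ 2), div_div]

end VisibleAux
end

section
/- A subset A ⊆ ℤ² belongs to the closure of the translation orbit of the set V of visible points of ℤ² in the local topology — that is, for every R > 0 there exists t ∈ ℤ² with A ∩ B_R(0) = (t + V) ∩ B_R(0), where B_R(0) ⊂ ℝ² is the open disc of radius R centred at the origin — if and only if for every prime p there exists c ∈ ℤ² such that A ∩ (c + pℤ²) = ∅. -/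
/-- The visible points of the square lattice `ℤ²`. -/
def visiblePoints : Set (ℤ × ℤ) := {v | Int.gcd v.1 v.2 = 1}


lemma crt19 (s : Finset ℕ) (hp : ∀ p ∈ s, p.Prime) (f : ℕ → ℤ) :
    ∃ x : ℤ, ∀ p ∈ s, (p : ℤ) ∣ x - f p := by
  classical
  induction s using Finset.induction_on with
  | empty => exact ⟨0, by simp⟩
  | @insert q s hq ih =>
    obtain ⟨x, hx⟩ := ih (fun p hps => hp p (Finset.mem_insert_of_mem hps))
    have hqp : q.Prime := hp q (Finset.mem_insert_self q s)
    set m : ℕ := ∏ p ∈ s, p with hm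
    have hcop : Nat.Coprime q m := by
      apply Nat.Coprime.prod_right
      intro p hps
      exact (Nat.coprime_primes hqp (hp p (Finset.mem_insert_of_mem hps))).2
        (fun h => hq (h ▸ hps))
    have hic : IsCoprime (m : ℤ) (q : ℤ) := by
      rw [Int.isCoprime_iff_gcd_eq_one]
      simpa [Int.gcd_natCast_natCast] using hcop.symm
    obtain ⟨a, b, hab⟩ := hic
    refine ⟨x + m * (a * (f q - x)), ?_⟩
    intro p hps
    rcases Finset.mem_insert.1 hps with h | hps
    · subst h
      exact ⟨b * (x - f p), by linear_combination (f p - x) * hab⟩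
    · have h1 : (p : ℤ) ∣ (m : ℤ) :=
        Int.natCast_dvd_natCast.2 (Finset.dvd_prod_of_mem _ hps)
      have h2 : x + m * (a * (f q - x)) - f p = (x - f p) + m * (a * (f q - x)) := by ring
      rw [h2]
      exact dvd_add (hx p hps) (Dvd.dvd.mul_right h1 _)

lemma primes19 (S : Finset (ℤ×ℤ)) (B : ℕ) :
    ∃ q : (ℤ×ℤ) → ℕ, (∀ w ∈ S, (q w).Prime ∧ B < q w) ∧ Set.InjOn q S := by
  classical
  induction S using Finset.induction_on with
  | empty => exact ⟨fun _ => 2, by simp, by simp⟩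
  | @insert a S ha ih =>
    obtain ⟨q, hq1, hq2⟩ := ih
    obtain ⟨P, hP1, hP2⟩ := Nat.exists_infinite_primes (max B (S.sup q) + 1)
    refine ⟨Function.update q a P, ?_, ?_⟩
    · intro w hw
      rcases Finset.mem_insert.1 hw with rfl | hw
      · simp only [Function.update_self]
        exact ⟨hP2, lt_of_le_of_lt (le_max_left _ _) (Nat.lt_of_succ_le hP1)⟩
      · rw [Function.update_of_ne (fun h : w = a => ha (h ▸ hw))]
        exact hq1 w hw
    · intro w hw w' hw' hww
      simp only [Finset.coe_insert, Set.mem_insert_iff] at hw hw'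
      have key : ∀ v ∈ S, q v < P := fun v hv =>
        lt_of_le_of_lt (le_trans (Finset.le_sup hv) (le_max_right B _)) (Nat.lt_of_succ_le hP1)
      by_cases h1 : w = a <;> by_cases h2 : w' = a
      · rw [h1, h2]
      · exfalso
        rcases hw' with h | hw'
        · exact h2 h
        rw [h1, Function.update_self,
          Function.update_of_ne (fun h : w' = a => ha (h ▸ hw'))] at hww
        exact Nat.ne_of_lt (key w' hw') hww.symm
      · exfalso
        rcases hw with h | hw
        · exact h1 h
        rw [h2, Function.update_self,
          Function.update_of_ne (fun h : w = a => ha (h ▸ hw))] at hww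
        exact Nat.ne_of_lt (key w hw) hww
      · rcases hw with h | hw
        · exact absurd h h1
        rcases hw' with h | hw'
        · exact absurd h h2
        rw [Function.update_of_ne h1, Function.update_of_ne h2] at hww
        exact hq2 hw hw' hww

lemma avoid19 (d : ℕ) (hd : d.Prime) (M : ℤ) (hM : ¬ (d:ℤ) ∣ M) (Z : Finset (ℤ×ℤ))
    (hcard : Z.card < d) (b : (ℤ×ℤ) → ℤ) :
    ∃ r : ℤ, ∀ z ∈ Z, ¬ (d:ℤ) ∣ (b z - M * r) := by
  classical
  haveI : Fact d.Prime := ⟨hd⟩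
  have hMz : (M : ZMod d) ≠ 0 := by rwa [Ne, ZMod.intCast_zmod_eq_zero_iff_dvd]
  set bad : Finset (ZMod d) := Z.image (fun z => (b z : ZMod d) * (M : ZMod d)⁻¹) with hbad
  have hlt : bad.card < Fintype.card (ZMod d) :=
    lt_of_le_of_lt Finset.card_image_le (by rwa [ZMod.card])
  have hne : ∃ ρ : ZMod d, ρ ∉ bad := by
    by_contra h
    push_neg at h
    rw [Finset.eq_univ_iff_forall.2 h, Finset.card_univ] at hlt
    exact lt_irrefl _ hlt
  obtain ⟨ρ, hρ⟩ := hne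
  refine ⟨(ρ.val : ℤ), ?_⟩
  intro z hz hdvd
  apply hρ
  have h0 : ((b z - M * (ρ.val : ℤ) : ℤ) : ZMod d) = 0 :=
    (ZMod.intCast_zmod_eq_zero_iff_dvd _ _).2 hdvd
  push_cast [ZMod.natCast_val, ZMod.cast_id] at h0
  have hbz : (b z : ZMod d) = (M : ZMod d) * ρ := sub_eq_zero.1 h0
  have hρeq : ρ = (b z : ZMod d) * (M : ZMod d)⁻¹ := by
    rw [hbz]
    field_simp
  exact Finset.mem_image.2 ⟨z, hz, hρeq.symm⟩

lemma finball19 (R : ℝ) (hR : 0 < R) :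
    {z : ℤ × ℤ | (z.1:ℝ)^2 + (z.2:ℝ)^2 < R^2}.Finite := by
  apply Set.Finite.subset (Set.Finite.prod (Set.finite_Icc (-⌈R⌉) ⌈R⌉) (Set.finite_Icc (-⌈R⌉) ⌈R⌉))
  rintro ⟨x, y⟩ hz
  simp only [Set.mem_setOf_eq] at hz
  have h1 : R ≤ (⌈R⌉ : ℝ) := Int.le_ceil R
  have hx1 : (x:ℝ) ≤ (⌈R⌉:ℝ) := by nlinarith [sq_nonneg (y:ℝ)]
  have hx2 : (-(⌈R⌉:ℤ) : ℝ) ≤ (x:ℝ) := by push_cast; nlinarith [sq_nonneg (y:ℝ)]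
  have hy1 : (y:ℝ) ≤ (⌈R⌉:ℝ) := by nlinarith [sq_nonneg (x:ℝ)]
  have hy2 : (-(⌈R⌉:ℤ) : ℝ) ≤ (y:ℝ) := by push_cast; nlinarith [sq_nonneg (x:ℝ)]
  constructor
  · exact Set.mem_Icc.2 ⟨by exact_mod_cast hx2, by exact_mod_cast hx1⟩
  · exact Set.mem_Icc.2 ⟨by exact_mod_cast hy2, by exact_mod_cast hy1⟩

lemma bound19 (R : ℝ) (hR : 0 < R) (z : ℤ × ℤ)
    (hz : (z.1:ℝ)^2 + (z.2:ℝ)^2 < R^2) : |z.1| ≤ ⌈R⌉ ∧ |z.2| ≤ ⌈R⌉ := by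
  have h1 : R ≤ (⌈R⌉ : ℝ) := Int.le_ceil R
  constructor <;> rw [abs_le] <;> constructor
  · exact_mod_cast (by push_cast; nlinarith [sq_nonneg (z.2:ℝ)] : (-(⌈R⌉:ℤ) : ℝ) ≤ (z.1:ℝ))
  · exact_mod_cast (by nlinarith [sq_nonneg (z.2:ℝ)] : (z.1:ℝ) ≤ ((⌈R⌉:ℤ) : ℝ))
  · exact_mod_cast (by push_cast; nlinarith [sq_nonneg (z.1:ℝ)] : (-(⌈R⌉:ℤ) : ℝ) ≤ (z.2:ℝ))
  · exact_mod_cast (by nlinarith [sq_nonneg (z.1:ℝ)] : (z.2:ℝ) ≤ ((⌈R⌉:ℤ) : ℝ))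

lemma back19 (A : Set (ℤ × ℤ))
    (hA : ∀ p : ℕ, p.Prime → ∃ c : ℤ × ℤ, ∀ z ∈ A,
      ¬((p : ℤ) ∣ z.1 - c.1 ∧ (p : ℤ) ∣ z.2 - c.2))
    (R : ℝ) (hR : 0 < R) :
    ∃ t : ℤ × ℤ,
      {z : ℤ × ℤ | z ∈ A ∧ (z.1 : ℝ) ^ 2 + (z.2 : ℝ) ^ 2 < R ^ 2} =
        {z : ℤ × ℤ | z ∈ (fun v => t + v) '' visiblePoints ∧
          (z.1 : ℝ) ^ 2 + (z.2 : ℝ) ^ 2 < R ^ 2} := by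
  classical
  set N : ℤ := ⌈R⌉ with hNdef
  have hN0 : 0 < N := Int.ceil_pos.2 hR
  have hFfin : {z : ℤ × ℤ | (z.1:ℝ)^2 + (z.2:ℝ)^2 < R^2}.Finite := finball19 R hR
  set F : Set (ℤ × ℤ) := {z : ℤ × ℤ | (z.1:ℝ)^2 + (z.2:ℝ)^2 < R^2} with hF
  have hAFfin : (A ∩ F).Finite := hFfin.subset Set.inter_subset_right
  have hQfin : (F \ A).Finite := hFfin.subset Set.diff_subset
  set AF := hAFfin.toFinset with hAFdef
  set Q := hQfin.toFinset with hQdef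
  set K := AF.card with hK
  set B : ℕ := K + 2 * N.toNat + 1 with hB
  obtain ⟨q, hq1, hq2⟩ := primes19 Q B
  set S₁ := (Finset.range (K+1)).filter Nat.Prime with hS₁
  set S₂ := Q.image q with hS₂
  set S := S₁ ∪ S₂ with hS
  have hSprime : ∀ p ∈ S, p.Prime := by
    intro p hp
    rcases Finset.mem_union.1 hp with h | h
    · exact (Finset.mem_filter.1 h).2
    · obtain ⟨w, hw, rfl⟩ := Finset.mem_image.1 h
      exact (hq1 w hw).1
  have hccex : ∀ p : ℕ, ∃ cp : ℤ × ℤ, p.Prime → ∀ z ∈ A,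
      ¬((p : ℤ) ∣ z.1 - cp.1 ∧ (p : ℤ) ∣ z.2 - cp.2) := by
    intro p
    by_cases hp : p.Prime
    · obtain ⟨cp, hcp⟩ := hA p hp
      exact ⟨cp, fun _ => hcp⟩
    · exact ⟨0, fun h => absurd h hp⟩
  choose cc hcc using hccex
  have hwex : ∀ p : ℕ, ∃ wp : ℤ × ℤ, (∃ w ∈ Q, q w = p) → wp ∈ Q ∧ q wp = p := by
    intro p
    by_cases h : ∃ w ∈ Q, q w = p
    · obtain ⟨w, hw, hqw⟩ := h
      exact ⟨w, fun _ => ⟨hw, hqw⟩⟩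
    · exact ⟨0, fun hh => absurd hh h⟩
  choose ws hws using hwex
  set f : ℕ → ℤ := fun p => if ∃ w ∈ Q, q w = p then (ws p).1 else (cc p).1 with hf
  set g : ℕ → ℤ := fun p => if ∃ w ∈ Q, q w = p then (ws p).2 else (cc p).2 with hgdef
  obtain ⟨x₁, hx₁⟩ := crt19 S hSprime f
  obtain ⟨x₂, hx₂⟩ := crt19 S hSprime g
  set Mn : ℕ := ∏ p ∈ S, p with hMn
  set M : ℤ := (Mn : ℤ) with hM
  have hM1 : 1 ≤ M := by
    rw [hM]
    exact_mod_cast Nat.one_le_iff_ne_zero.2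
      (Finset.prod_ne_zero_iff.2 fun p hp => (hSprime p hp).pos.ne')
  have hMdvd : ∀ p ∈ S, (p:ℤ) ∣ M := fun p hp =>
    Int.natCast_dvd_natCast.2 (Finset.dvd_prod_of_mem _ hp)
  set y₂ : ℤ := x₂ + M * (N + 1 + |x₂|) with hy₂def
  have hy₂ : N < y₂ := by nlinarith [abs_nonneg x₂, neg_abs_le x₂, hN0, hM1]
  set D : Finset ℕ := (AF.biUnion (fun z => (z.2 - y₂).natAbs.primeFactors)).filter
      (fun d => ¬ d ∣ Mn) with hD
  have hDfacts : ∀ d ∈ D, d.Prime ∧ ¬ (d:ℤ) ∣ M ∧ K < d := by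
    intro d hd
    obtain ⟨hd1, hd2⟩ := Finset.mem_filter.1 hd
    obtain ⟨z, hz, hdz⟩ := Finset.mem_biUnion.1 hd1
    have hdp : d.Prime := Nat.prime_of_mem_primeFactors hdz
    refine ⟨hdp, ?_, ?_⟩
    · rw [hM]; exact fun h => hd2 (Int.natCast_dvd_natCast.1 h)
    · by_contra hle
      push_neg at hle
      have hmem : d ∈ S₁ := Finset.mem_filter.2 ⟨Finset.mem_range.2 (by omega), hdp⟩
      exact hd2 (Finset.dvd_prod_of_mem _ (Finset.mem_union_left _ hmem))
  have hrex : ∀ d ∈ D, ∃ r : ℤ, ∀ z ∈ AF, ¬ (d:ℤ) ∣ ((z.1 - x₁) - M * r) := by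
    intro d hd
    obtain ⟨hdp, hdM, hdK⟩ := hDfacts d hd
    exact avoid19 d hdp M hdM AF (by omega) _
  choose! r hr using hrex
  obtain ⟨s₁, hs₁⟩ := crt19 D (fun d hd => (hDfacts d hd).1) r
  set t : ℤ × ℤ := (x₁ + M * s₁, y₂) with ht
  have ht1 : ∀ p ∈ S, (p:ℤ) ∣ t.1 - f p := by
    intro p hp
    have heq : t.1 - f p = (x₁ - f p) + M * s₁ := by rw [ht]; ring
    rw [heq]
    exact dvd_add (hx₁ p hp) ((hMdvd p hp).mul_right _)
  have ht2 : ∀ p ∈ S, (p:ℤ) ∣ t.2 - g p := by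
    intro p hp
    have heq : t.2 - g p = (x₂ - g p) + M * (N + 1 + |x₂|) := by rw [ht, hy₂def]; ring
    rw [heq]
    exact dvd_add (hx₂ p hp) ((hMdvd p hp).mul_right _)
  have hbound : ∀ z ∈ F, |z.1| ≤ N ∧ |z.2| ≤ N := fun z hz => bound19 R hR z hz
  -- key claim 1
  have key1 : ∀ z : ℤ × ℤ, z ∈ A → z ∈ F → Int.gcd (z.1 - t.1) (z.2 - t.2) = 1 := by
    intro z hzA hzF
    have hzAF : z ∈ AF := hAFfin.mem_toFinset.2 ⟨hzA, hzF⟩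
    have ha : z.2 - t.2 ≠ 0 := by
      have h2 := (hbound z hzF).2
      have : z.2 ≤ N := (abs_le.1 h2).2
      have ht2' : t.2 = y₂ := rfl
      omega
    by_contra hgc
    obtain ⟨d, hdp, hdvd⟩ := Nat.exists_prime_and_dvd hgc
    have hd1 : (d:ℤ) ∣ z.1 - t.1 :=
      dvd_trans (Int.natCast_dvd_natCast.2 hdvd) (Int.gcd_dvd_left _ _)
    have hd2 : (d:ℤ) ∣ z.2 - t.2 :=
      dvd_trans (Int.natCast_dvd_natCast.2 hdvd) (Int.gcd_dvd_right _ _)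
    by_cases hdM : d ∣ Mn
    · have hdS : d ∈ S := by
        obtain ⟨p, hp, hdp'⟩ := (hdp.prime.dvd_finset_prod_iff id).1 hdM
        rwa [(Nat.prime_dvd_prime_iff_eq hdp (hSprime p hp)).1 hdp']
      rcases Finset.mem_union.1 hdS with hdS₁ | hdS₂
      · -- small prime case
        have hdK : d ≤ K := by
          have := (Finset.mem_filter.1 hdS₁).1
          rw [Finset.mem_range] at this; omega
        have hnotex : ¬ ∃ w ∈ Q, q w = d := by
          rintro ⟨w, hw, hqwd⟩
          have hBq := (hq1 w hw).2
          omega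
        have hfd : f d = (cc d).1 := by rw [hf]; simp only [hnotex, if_false]
        have hgd : g d = (cc d).2 := by rw [hgdef]; simp only [hnotex, if_false]
        apply hcc d hdp z hzA
        constructor
        · have h5 := ht1 d hdS
          rw [hfd] at h5
          have h6 : z.1 - (cc d).1 = (z.1 - t.1) + (t.1 - (cc d).1) := by ring
          rw [h6]; exact dvd_add hd1 h5
        · have h5 := ht2 d hdS
          rw [hgd] at h5
          have h6 : z.2 - (cc d).2 = (z.2 - t.2) + (t.2 - (cc d).2) := by ring
          rw [h6]; exact dvd_add hd2 h5
      · -- reserved large prime case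
        obtain ⟨w0, hw0, hqw0⟩ := Finset.mem_image.1 hdS₂
        have hex : ∃ w ∈ Q, q w = d := ⟨w0, hw0, hqw0⟩
        obtain ⟨hwsQ, hwsq⟩ := hws d hex
        have hfd : f d = (ws d).1 := by rw [hf]; simp only [hex, if_true]
        have hgd : g d = (ws d).2 := by rw [hgdef]; simp only [hex, if_true]
        have hz1 : (d:ℤ) ∣ z.1 - (ws d).1 := by
          have h5 := ht1 d hdS
          rw [hfd] at h5
          have h6 : z.1 - (ws d).1 = (z.1 - t.1) + (t.1 - (ws d).1) := by ring
          rw [h6]; exact dvd_add hd1 h5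
        have hz2 : (d:ℤ) ∣ z.2 - (ws d).2 := by
          have h5 := ht2 d hdS
          rw [hgd] at h5
          have h6 : z.2 - (ws d).2 = (z.2 - t.2) + (t.2 - (ws d).2) := by ring
          rw [h6]; exact dvd_add hd2 h5
        have hwF : (ws d) ∈ F := (hQfin.mem_toFinset.1 hwsQ).1
        have hb1 := hbound z hzF
        have hb2 := hbound (ws d) hwF
        have hdB : B < d := by rw [← hwsq]; exact (hq1 _ hwsQ).2
        have hNt : (N.toNat : ℤ) = N := Int.toNat_of_nonneg hN0.le
        have hdlarge : (2 * N : ℤ) < (d : ℤ) := by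
          have : (B : ℤ) < (d : ℤ) := by exact_mod_cast hdB
          rw [hB] at this
          push_cast at this
          omega
        have e1 : z.1 - (ws d).1 = 0 := by
          apply Int.eq_zero_of_abs_lt_dvd hz1
          have := abs_sub_abs_le_abs_sub z.1 (ws d).1
          have h7 := abs_sub z.1 (ws d).1
          omega
        have e2 : z.2 - (ws d).2 = 0 := by
          apply Int.eq_zero_of_abs_lt_dvd hz2
          have h7 := abs_sub z.2 (ws d).2
          omega
        have hzw : z = ws d := Prod.ext (by omega) (by omega)
        have := (hQfin.mem_toFinset.1 hwsQ).2
        rw [← hzw] at this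
        exact this hzA
    · -- new prime case
      have hdD : d ∈ D := by
        refine Finset.mem_filter.2 ⟨Finset.mem_biUnion.2 ⟨z, hzAF, ?_⟩, hdM⟩
        refine Nat.mem_primeFactors.2 ⟨hdp, ?_, ?_⟩
        · exact Int.natCast_dvd.1 hd2
        · exact Int.natAbs_ne_zero.2 ha
      apply hr d hdD z hzAF
      have h4 : z.1 - x₁ - M * (r d) = (z.1 - t.1) + M * (s₁ - r d) := by rw [ht]; ring
      rw [h4]
      exact dvd_add hd1 ((hs₁ d hdD).mul_left M)
  -- key claim 2
  have key2 : ∀ z : ℤ × ℤ, z ∈ F → z ∉ A → Int.gcd (z.1 - t.1) (z.2 - t.2) ≠ 1 := by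
    intro z hzF hzA
    have hzQ : z ∈ Q := hQfin.mem_toFinset.2 ⟨hzF, hzA⟩
    have hdS : q z ∈ S := Finset.mem_union_right _ (Finset.mem_image_of_mem q hzQ)
    have hex : ∃ w ∈ Q, q w = q z := ⟨z, hzQ, rfl⟩
    obtain ⟨hwsQ, hwsq⟩ := hws (q z) hex
    have hwz : ws (q z) = z := hq2 (Finset.mem_coe.2 hwsQ) (Finset.mem_coe.2 hzQ) hwsq
    have hfd : f (q z) = z.1 := by rw [hf]; simp only [hex, if_true, hwz]
    have hgd : g (q z) = z.2 := by rw [hgdef]; simp only [hex, if_true, hwz]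
    intro hgcd
    have hd1 : ((q z : ℕ):ℤ) ∣ z.1 - t.1 := by
      have h5 := ht1 (q z) hdS
      rw [hfd] at h5
      have h6 : z.1 - t.1 = -(t.1 - z.1) := by ring
      rw [h6]; exact dvd_neg.2 h5
    have hd2 : ((q z : ℕ):ℤ) ∣ z.2 - t.2 := by
      have h5 := ht2 (q z) hdS
      rw [hgd] at h5
      have h6 : z.2 - t.2 = -(t.2 - z.2) := by ring
      rw [h6]; exact dvd_neg.2 h5
    have hdg : ((q z : ℕ):ℤ) ∣ (Int.gcd (z.1 - t.1) (z.2 - t.2) : ℤ) := Int.natCast_dvd_natCast.2 (Int.dvd_gcd hd1 hd2)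
    rw [hgcd] at hdg
    have hone : (q z) ∣ 1 := by exact_mod_cast hdg
    exact (hq1 z hzQ).1.one_lt.ne' (Nat.dvd_one.1 hone)
  refine ⟨t, ?_⟩
  ext z
  simp only [Set.mem_setOf_eq, Set.mem_image]
  constructor
  · rintro ⟨hzA, hzball⟩
    have hzF : z ∈ F := hzball
    refine ⟨⟨(z.1 - t.1, z.2 - t.2), key1 z hzA hzF, ?_⟩, hzball⟩
    have : t + (z.1 - t.1, z.2 - t.2) = z := by
      apply Prod.ext <;> simp
    exact this
  · rintro ⟨⟨v, hv, hveq⟩, hzball⟩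
    have hzF : z ∈ F := hzball
    refine ⟨?_, hzball⟩
    by_contra hzA
    apply key2 z hzF hzA
    have hv1 : v.1 = z.1 - t.1 := by
      have h8 : t.1 + v.1 = z.1 := congrArg Prod.fst hveq
      linarith
    have hv2 : v.2 = z.2 - t.2 := by
      have h8 : t.2 + v.2 = z.2 := congrArg Prod.snd hveq
      linarith
    rw [← hv1, ← hv2]
    exact hv

lemma fwd19 (A : Set (ℤ × ℤ))
    (H : ∀ R : ℝ, 0 < R → ∃ t : ℤ × ℤ,
        {z : ℤ × ℤ | z ∈ A ∧ (z.1 : ℝ) ^ 2 + (z.2 : ℝ) ^ 2 < R ^ 2} =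
          {z : ℤ × ℤ | z ∈ (fun v => t + v) '' visiblePoints ∧
            (z.1 : ℝ) ^ 2 + (z.2 : ℝ) ^ 2 < R ^ 2})
    (p : ℕ) (hp : p.Prime) :
    ∃ c : ℤ × ℤ, ∀ z ∈ A, ¬((p : ℤ) ∣ z.1 - c.1 ∧ (p : ℤ) ∣ z.2 - c.2) := by
  classical
  haveI : Fact p.Prime := ⟨hp⟩
  have hch : ∀ k : ℕ, ∃ t : ℤ × ℤ,
      {z : ℤ × ℤ | z ∈ A ∧ (z.1 : ℝ) ^ 2 + (z.2 : ℝ) ^ 2 < ((k:ℝ)+1) ^ 2} =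
        {z : ℤ × ℤ | z ∈ (fun v => t + v) '' visiblePoints ∧
          (z.1 : ℝ) ^ 2 + (z.2 : ℝ) ^ 2 < ((k:ℝ)+1) ^ 2} :=
    fun k => H ((k:ℝ)+1) (by positivity)
  choose T hT using hch
  obtain ⟨v, hv⟩ := Finite.exists_infinite_fiber
    (fun k : ℕ => ((((T k).1 : ZMod p)), (((T k).2 : ZMod p))))
  rw [Set.infinite_coe_iff] at hv
  obtain ⟨k₀, hk₀⟩ := hv.nonempty
  refine ⟨T k₀, ?_⟩
  rintro z hz ⟨hdvd1, hdvd2⟩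
  obtain ⟨k, hkmem, hkgt⟩ := hv.exists_gt ((z.1^2 + z.2^2).toNat)
  have hzball : (z.1:ℝ)^2 + (z.2:ℝ)^2 < ((k:ℝ)+1)^2 := by
    have h1 : z.1^2 + z.2^2 < (k : ℤ) := by
      have hnn : 0 ≤ z.1^2 + z.2^2 := by positivity
      omega
    have h2 : ((z.1:ℝ)^2 + (z.2:ℝ)^2) < (k:ℝ) := by exact_mod_cast h1
    nlinarith [Nat.cast_nonneg (α := ℝ) k]
  have hzR : z ∈ {z : ℤ × ℤ | z ∈ (fun v => T k + v) '' visiblePoints ∧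
      (z.1 : ℝ) ^ 2 + (z.2 : ℝ) ^ 2 < ((k:ℝ)+1) ^ 2} := by
    rw [← hT k]
    exact ⟨hz, hzball⟩
  obtain ⟨⟨w, hw, hweq⟩, -⟩ := hzR
  have hw1 : w.1 = z.1 - (T k).1 := by
    have h8 : (T k).1 + w.1 = z.1 := congrArg Prod.fst hweq
    linarith
  have hw2 : w.2 = z.2 - (T k).2 := by
    have h8 : (T k).2 + w.2 = z.2 := congrArg Prod.snd hweq
    linarith
  have hgcd : Int.gcd (z.1 - (T k).1) (z.2 - (T k).2) = 1 := by
    rw [← hw1, ← hw2]; exact hw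
  -- T k ≡ T k₀ mod p
  have hkk : ((T k).1 : ZMod p) = ((T k₀).1 : ZMod p) ∧
      ((T k).2 : ZMod p) = ((T k₀).2 : ZMod p) := by
    have e1 : (fun k : ℕ => ((((T k).1 : ZMod p)), (((T k).2 : ZMod p)))) k = v := hkmem
    have e2 : (fun k : ℕ => ((((T k).1 : ZMod p)), (((T k).2 : ZMod p)))) k₀ = v := hk₀
    constructor
    · have := congrArg Prod.fst (e1.trans e2.symm); simpa using this
    · have := congrArg Prod.snd (e1.trans e2.symm); simpa using this
  have hc1 : (p:ℤ) ∣ (T k).1 - (T k₀).1 := by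
    rw [← ZMod.intCast_zmod_eq_zero_iff_dvd]
    push_cast
    rw [sub_eq_zero]
    exact hkk.1
  have hc2 : (p:ℤ) ∣ (T k).2 - (T k₀).2 := by
    rw [← ZMod.intCast_zmod_eq_zero_iff_dvd]
    push_cast
    rw [sub_eq_zero]
    exact hkk.2
  have hd1 : (p:ℤ) ∣ z.1 - (T k).1 := by
    have heq : z.1 - (T k).1 = (z.1 - (T k₀).1) - ((T k).1 - (T k₀).1) := by ring
    rw [heq]; exact dvd_sub hdvd1 hc1
  have hd2 : (p:ℤ) ∣ z.2 - (T k).2 := by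
    have heq : z.2 - (T k).2 = (z.2 - (T k₀).2) - ((T k).2 - (T k₀).2) := by ring
    rw [heq]; exact dvd_sub hdvd2 hc2
  have := Int.dvd_gcd hd1 hd2
  rw [hgcd] at this
  have hone : p ∣ 1 := by exact_mod_cast this
  exact hp.one_lt.ne' (Nat.dvd_one.1 hone)


/-- A subset `A ⊆ ℤ²` lies in the local-topology orbit closure of the visible points
(i.e. every central patch of `A` is a patch of a `ℤ²`-translate of `V`) if and only if
for every prime `p` it misses some coset `c + pℤ²`. -/
theorem stmt19 (A : Set (ℤ × ℤ)) :
    (∀ R : ℝ, 0 < R → ∃ t : ℤ × ℤ,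
        {z : ℤ × ℤ | z ∈ A ∧ (z.1 : ℝ) ^ 2 + (z.2 : ℝ) ^ 2 < R ^ 2} =
          {z : ℤ × ℤ | z ∈ (fun v => t + v) '' visiblePoints ∧
            (z.1 : ℝ) ^ 2 + (z.2 : ℝ) ^ 2 < R ^ 2}) ↔
      ∀ p : ℕ, p.Prime → ∃ c : ℤ × ℤ, ∀ z ∈ A,
        ¬((p : ℤ) ∣ z.1 - c.1 ∧ (p : ℤ) ∣ z.2 - c.2) := by
  exact ⟨fun H p hp => fwd19 A H p hp, fun h R hR => back19 A h R hR⟩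
end
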